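/- arXiv:1903.00681 — 5 statements merged into one kernel-verified Lean document; each statement's English description precedes it below -/
import Mathlib

section
/- Let 1 ≤ p ≤ q ≤ ∞. There exist constants c, C > 0 depending only on p and q such that the following holds. For every n ≥ 1 and all points 0 = x_0 ≤ x_1 ≤ … ≤ x_n ≤ x_{n+1} = 1, let ℓ = max_{0 ≤ i ≤ n} (x_{i+1} − x_i) and let R(x_1,…,x_n) = sup{ ‖f‖_{L_q([0,1])} : f ∈ W^1_p([0,1]), ‖f‖_{W^1_p} ≤ 1, f(x_i) = 0 for all 1 ≤ i ≤ n }. Then c · ℓ^{1 − 1/p + 1/q} ≤ R(x_1,…,x_n) ≤ C · ℓ^{1 − 1/p + 1/q}. -/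
open MeasureTheory Set
open scoped ENNReal

/-- Lebesgue measure restricted to the unit interval. -/
noncomputable def mu01 : Measure ℝ := volume.restrict (Set.Icc (0:ℝ) 1)

/-- `f` is in `W^1_p([0,1])` (as a function with a.e. derivative `g`):
`f` is absolutely continuous on `[0,1]`, given as the integral of `g`. -/
def IsW11 (f g : ℝ → ℝ) : Prop :=
  IntervalIntegrable g volume 0 1 ∧
    ∀ x ∈ Set.Icc (0:ℝ) 1, f x = f 0 + ∫ t in (0:ℝ)..x, g t

/-- The `W^1_p([0,1])` norm of `f` with derivative `g`:
`(‖f‖_p^p + ‖g‖_p^p)^(1/p)` for finite `p`, and `max (‖f‖_∞, ‖g‖_∞)` for `p = ∞`. -/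
noncomputable def sobNorm (p : ℝ≥0∞) (f g : ℝ → ℝ) : ℝ≥0∞ :=
  if p = ∞ then max (eLpNorm f ∞ mu01) (eLpNorm g ∞ mu01)
  else (eLpNorm f p mu01 ^ p.toReal + eLpNorm g p mu01 ^ p.toReal) ^ (1 / p.toReal)

/-- The radius of the standard information `f ↦ (f (x 1), …, f (x n))` for
`L_q`-approximation on the unit ball of `W^1_p([0,1])`:
`sup { ‖f‖_q : ‖f‖_{W^1_p} ≤ 1, f (x i) = 0 for 1 ≤ i ≤ n }`. -/
noncomputable def sobRadius (p q : ℝ≥0∞) (n : ℕ) (x : ℕ → ℝ) : ℝ≥0∞ :=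
  ⨆ f : ℝ → ℝ, ⨆ g : ℝ → ℝ,
    ⨆ (_ : IsW11 f g ∧ sobNorm p f g ≤ 1 ∧ ∀ i, 1 ≤ i → i ≤ n → f (x i) = 0),
      eLpNorm f q mu01

lemma xmono (x : ℕ → ℝ) (k : ℕ) (hm : ∀ m, m < k → x m ≤ x (m+1)) :
    ∀ i j, i ≤ j → j ≤ k → x i ≤ x j := by
  intro i j hij
  induction j, hij using Nat.le_induction with
  | base => intro _; exact le_rfl
  | succ j hij ih =>
    intro hjk
    exact (ih ((Nat.le_succ j).trans hjk)).trans (hm j (Nat.lt_of_lt_of_le (Nat.lt_succ_self j) hjk))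

lemma lint_sum (h : ℝ → ℝ≥0∞) (x : ℕ → ℝ) (k : ℕ) (hm : ∀ m, m < k → x m ≤ x (m+1)) :
    ∫⁻ t in Ioc (x 0) (x k), h t = ∑ i ∈ Finset.range k, ∫⁻ t in Ioc (x i) (x (i+1)), h t := by
  induction k with
  | zero => simp
  | succ k ih =>
    have hm' : ∀ m, m < k → x m ≤ x (m+1) := fun m hmk => hm m (hmk.trans (Nat.lt_succ_self k))
    have h0k : x 0 ≤ x k := xmono x (k+1) hm 0 k (Nat.zero_le _) (Nat.le_succ k)
    have hkk : x k ≤ x (k+1) := hm k (Nat.lt_succ_self k)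
    rw [← Set.Ioc_union_Ioc_eq_Ioc h0k hkk, lintegral_union measurableSet_Ioc
      (Set.Ioc_disjoint_Ioc_of_le le_rfl), ih hm', Finset.sum_range_succ]

lemma cover (x : ℕ → ℝ) (k : ℕ) (hk : 1 ≤ k) (t : ℝ) (ht : t ∈ Icc (x 0) (x k)) :
    ∃ i < k, t ∈ Icc (x i) (x (i+1)) := by
  classical
  set P : ℕ → Prop := fun m => x m ≤ t with hP
  have hP0 : P 0 := ht.1
  set i := Nat.findGreatest P (k-1) with hi
  have hik : i ≤ k - 1 := Nat.findGreatest_le _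
  have hPi : P i := Nat.findGreatest_spec (Nat.zero_le _) hP0
  rcases eq_or_lt_of_le hik with he | hlt
  · exact ⟨k-1, Nat.sub_lt hk one_pos, by
      constructor
      · rw [← he]; exact hPi
      · have : k - 1 + 1 = k := Nat.succ_pred_eq_of_pos hk
        rw [this]; exact ht.2⟩
  · refine ⟨i, lt_of_lt_of_le hlt (Nat.sub_le k 1), hPi, ?_⟩
    have hgr := Nat.findGreatest_is_greatest (by omega : Nat.findGreatest P (k-1) < i + 1)
      (by omega : i + 1 ≤ k - 1)
    exact le_of_not_ge hgr

lemma inv_toReal_le_one (p : ℝ≥0∞) (hp : 1 ≤ p) : (1/p).toReal ≤ 1 := by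
  have h1 : 1/p ≤ 1 := by
    rw [one_div]
    exact ENNReal.inv_le_one.mpr hp
  calc (1/p).toReal ≤ (1:ℝ≥0∞).toReal := ENNReal.toReal_mono ENNReal.one_ne_top h1
    _ = 1 := by simp

lemma expo_eq (p : ℝ≥0∞) : 1/(1:ℝ≥0∞).toReal - 1/p.toReal = 1 - (1/p).toReal := by
  simp [one_div, ENNReal.toReal_inv]

open scoped Interval in
lemma ptwise (p : ℝ≥0∞) (hp : 1 ≤ p) (f g : ℝ → ℝ) (hW : IsW11 f g) (A B z t : ℝ)
    (hA : 0 ≤ A) (hB : B ≤ 1) (hz : z ∈ Icc A B) (ht : t ∈ Icc A B) (hfz : f z = 0) :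
    (‖f t‖₊ : ℝ≥0∞) ≤
      eLpNorm g p (volume.restrict (Ioc A B)) * ENNReal.ofReal (B - A) ^ (1 - (1/p).toReal) := by
  have ht01 : t ∈ Icc (0:ℝ) 1 := ⟨hA.trans ht.1, ht.2.trans hB⟩
  have hz01 : z ∈ Icc (0:ℝ) 1 := ⟨hA.trans hz.1, hz.2.trans hB⟩
  have hsub : ∀ w : ℝ, w ∈ Icc (0:ℝ) 1 → IntervalIntegrable g volume 0 w := by
    intro w hw
    refine hW.1.mono_set ?_
    rw [uIcc_of_le hw.1, uIcc_of_le zero_le_one]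
    exact Icc_subset_Icc le_rfl hw.2
  have h1 : f t = ∫ s in z..t, g s := by
    have h2 := hW.2 t ht01
    have h3 := hW.2 z hz01
    rw [hfz] at h3
    have h4 : f t = (∫ s in (0:ℝ)..t, g s) - ∫ s in (0:ℝ)..z, g s := by
      rw [h2]; linarith
    rw [h4, intervalIntegral.integral_interval_sub_left (hsub t ht01) (hsub z hz01)]
  have hIoc : Ι z t ⊆ Ioc A B := by
    apply Set.Ioc_subset_Ioc
    · exact le_min hz.1 ht.1
    · exact max_le hz.2 ht.2
  have hint : IntegrableOn g (Ioc A B) volume := by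
    refine ((intervalIntegrable_iff_integrableOn_Ioc_of_le zero_le_one).mp hW.1).mono_set ?_
    exact Ioc_subset_Ioc hA hB
  have hintuv : IntegrableOn g (Ι z t) volume := hint.mono_set hIoc
  have h5 : ‖f t‖ ≤ ∫ s in Ι z t, ‖g s‖ := by
    rw [h1]; exact intervalIntegral.norm_integral_le_integral_norm_uIoc
  calc (‖f t‖₊ : ℝ≥0∞) = ENNReal.ofReal ‖f t‖ := (ofReal_norm _).symm
    _ ≤ ENNReal.ofReal (∫ s in Ι z t, ‖g s‖) := ENNReal.ofReal_le_ofReal h5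
    _ = ∫⁻ s in Ι z t, ‖g s‖₊ := ofReal_integral_norm_eq_lintegral_enorm hintuv
    _ = eLpNorm g 1 (volume.restrict (Ι z t)) := (eLpNorm_one_eq_lintegral_enorm (f := g) (μ := volume.restrict (Ι z t))).symm
    _ ≤ eLpNorm g p (volume.restrict (Ι z t)) *
        (volume.restrict (Ι z t)) univ ^ (1/(1:ℝ≥0∞).toReal - 1/p.toReal) :=
      eLpNorm_le_eLpNorm_mul_rpow_measure_univ hp hintuv.aestronglyMeasurable
    _ ≤ eLpNorm g p (volume.restrict (Ioc A B)) * ENNReal.ofReal (B - A) ^ (1 - (1/p).toReal) := by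
      rw [expo_eq]
      refine mul_le_mul' (eLpNorm_mono_measure g (Measure.restrict_mono hIoc le_rfl)) ?_
      refine ENNReal.rpow_le_rpow ?_ (by linarith [inv_toReal_le_one p hp])
      rw [Measure.restrict_apply_univ]
      calc volume (Ι z t) ≤ volume (Ioc A B) := measure_mono hIoc
        _ = ENNReal.ofReal (B - A) := by rw [Real.volume_Ioc]

lemma upper (p q : ℝ≥0∞) (hp : 1 ≤ p) (hpq : p ≤ q) (n : ℕ) (hn : 1 ≤ n)
    (x : ℕ → ℝ) (hx0 : x 0 = 0) (hx1 : x (n+1) = 1)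
    (hxm : ∀ i j, i ≤ j → j ≤ n+1 → x i ≤ x j)
    (ℓ : ℝ) (hlpos : 0 < ℓ) (hgap : ∀ i, i ≤ n → x (i+1) - x i ≤ ℓ)
    (f g : ℝ → ℝ) (hW : IsW11 f g) (hg1 : eLpNorm g p mu01 ≤ 1)
    (hfz : ∀ i, 1 ≤ i → i ≤ n → f (x i) = 0) :
    eLpNorm f q mu01 ≤ ENNReal.ofReal (ℓ ^ (1 - (1/p).toReal + (1/q).toReal)) := by
  have hq : 1 ≤ q := hp.trans hpq
  set e : ℝ := 1 - (1/p).toReal with he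
  have he0 : 0 ≤ e := sub_nonneg.mpr (inv_toReal_le_one p hp)
  set L : ℝ≥0∞ := ENNReal.ofReal ℓ with hL
  set G : ℕ → ℝ≥0∞ := fun i => eLpNorm g p (volume.restrict (Ioc (x i) (x (i+1)))) with hG
  have hA0 : ∀ i, i ≤ n + 1 → 0 ≤ x i := fun i hi => hx0 ▸ hxm 0 i (Nat.zero_le _) hi
  have hB1 : ∀ i, i ≤ n + 1 → x i ≤ 1 := fun i hi => hx1 ▸ hxm i (n+1) hi le_rfl
  have key : ∀ i, i ≤ n → ∀ t ∈ Icc (x i) (x (i+1)),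
      (‖f t‖₊ : ℝ≥0∞) ≤ G i * L ^ e := by
    intro i hi t ht
    have hzmem : x (max 1 i) ∈ Icc (x i) (x (i+1)) := by
      rcases Nat.eq_zero_or_pos i with h0 | h1
      · subst h0
        have h10 : max 1 0 = 1 := by omega
        rw [h10]
        exact ⟨hxm 0 1 (Nat.zero_le _) (by omega), le_rfl⟩
      · rw [max_eq_right h1]
        exact ⟨le_rfl, hxm i (i+1) (Nat.le_succ i) (by omega)⟩
    have hzero : f (x (max 1 i)) = 0 := by
      refine hfz _ (le_max_left _ _) ?_
      rcases Nat.eq_zero_or_pos i with h0 | h1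
      · subst h0; omega
      · rw [max_eq_right h1]; exact hi
    refine (ptwise p hp f g hW (x i) (x (i+1)) (x (max 1 i)) t
      (hA0 i (by omega)) (hB1 (i+1) (by omega)) hzmem ht hzero).trans ?_
    refine mul_le_mul' le_rfl (ENNReal.rpow_le_rpow ?_ he0)
    exact ENNReal.ofReal_le_ofReal (hgap i hi)
  have hGle : ∀ i, i ≤ n → G i ≤ 1 := by
    intro i hi
    refine le_trans (le_trans ?_ hg1) le_rfl
    refine eLpNorm_mono_measure g ?_
    refine Measure.restrict_mono ?_ le_rfl
    exact fun t ht => ⟨hA0 i (by omega) |>.trans ht.1.le, ht.2.trans (hB1 (i+1) (by omega))⟩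
  by_cases hqtop : q = ∞
  · -- q = ∞
    have hqexp : (1/q).toReal = 0 := by simp [hqtop]
    rw [hqtop, eLpNorm_exponent_top]
    have hb : ∀ᵐ t ∂mu01, (fun s => (‖f s‖₊ : ℝ≥0∞)) t ≤ L ^ e := by
      rw [mu01]
      refine (ae_restrict_iff' measurableSet_Icc).mpr (ae_of_all _ fun t ht => ?_)
      rw [← hx0, ← hx1] at ht
      obtain ⟨i, hik, hti⟩ := cover x (n+1) (by omega) t ht
      calc (‖f t‖₊ : ℝ≥0∞) ≤ G i * L ^ e := key i (by omega) t hti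
        _ ≤ 1 * L ^ e := mul_le_mul' (hGle i (by omega)) le_rfl
        _ = L ^ e := one_mul _
    refine le_trans (essSup_le_of_ae_le _ hb) ?_
    rw [(by simp : (1/(⊤:ℝ≥0∞)).toReal = 0), add_zero, hL, ENNReal.ofReal_rpow_of_pos hlpos]
  · -- q finite (hence p finite)
    have hptop : p ≠ ∞ := fun h => hqtop (top_le_iff.mp (h ▸ hpq))
    have hp0 : p ≠ 0 := by intro h; rw [h] at hp; exact absurd hp (by simp)
    have hq0 : q ≠ 0 := by intro h; rw [h] at hq; exact absurd hq (by simp)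
    set pr := p.toReal with hpr
    set qr := q.toReal with hqr
    have hpr1 : 1 ≤ pr := by
      rw [hpr, ← ENNReal.toReal_one]; exact ENNReal.toReal_mono hptop hp
    have hprqr : pr ≤ qr := ENNReal.toReal_mono hqtop hpq
    have hqr0 : 0 < qr := by linarith
    have hpr0 : 0 < pr := by linarith
    have hGpr : ∀ i, (G i) ^ pr = ∫⁻ t in Ioc (x i) (x (i+1)), (‖g t‖₊ : ℝ≥0∞) ^ pr := by
      intro i
      simp only [hG]
      rw [eLpNorm_eq_lintegral_rpow_enorm_toReal hp0 hptop, ← ENNReal.rpow_mul,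
        one_div, inv_mul_cancel₀ (ne_of_gt hpr0), ENNReal.rpow_one]
      rfl
    have hgsum : ∑ i ∈ Finset.range (n+1), (G i) ^ pr ≤ 1 := by
      have h1 : ∑ i ∈ Finset.range (n+1), (G i) ^ pr
          = ∫⁻ t in Ioc (x 0) (x (n+1)), (‖g t‖₊ : ℝ≥0∞) ^ pr := by
        rw [lint_sum _ x (n+1) (fun m hm => hxm m (m+1) (Nat.le_succ m) (by omega))]
        exact Finset.sum_congr rfl fun i _ => hGpr i
      rw [h1, hx0, hx1]
      have h2 : ∫⁻ t in Ioc (0:ℝ) 1, (‖g t‖₊ : ℝ≥0∞) ^ pr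
          = ∫⁻ t in Icc (0:ℝ) 1, (‖g t‖₊ : ℝ≥0∞) ^ pr := setLIntegral_congr Ioc_ae_eq_Icc
      rw [h2]
      have h3 : (∫⁻ t in Icc (0:ℝ) 1, (‖g t‖₊ : ℝ≥0∞) ^ pr) = (eLpNorm g p mu01) ^ pr := by
        rw [eLpNorm_eq_lintegral_rpow_enorm_toReal hp0 hptop, ← ENNReal.rpow_mul,
          one_div, inv_mul_cancel₀ (ne_of_gt hpr0), ENNReal.rpow_one]
        rfl
      rw [h3]
      calc (eLpNorm g p mu01) ^ pr ≤ 1 ^ pr := ENNReal.rpow_le_rpow hg1 hpr0.le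
        _ = 1 := ENNReal.one_rpow pr
    rw [eLpNorm_eq_lintegral_rpow_enorm_toReal hq0 hqtop]
    have hstep : (∫⁻ t, (‖f t‖₊ : ℝ≥0∞) ^ qr ∂mu01) ≤ L ^ (e * qr) * L := by
      have hIcc : (∫⁻ t, (‖f t‖₊ : ℝ≥0∞) ^ qr ∂mu01)
          = ∫⁻ t in Ioc (x 0) (x (n+1)), (‖f t‖₊ : ℝ≥0∞) ^ qr := by
        rw [mu01, hx0, hx1]
        exact (setLIntegral_congr Ioc_ae_eq_Icc).symm
      rw [hIcc, lint_sum _ x (n+1) (fun m hm => hxm m (m+1) (Nat.le_succ m) (by omega))]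
      have hterm : ∀ i ∈ Finset.range (n+1),
          (∫⁻ t in Ioc (x i) (x (i+1)), (‖f t‖₊ : ℝ≥0∞) ^ qr)
            ≤ L ^ (e * qr) * ((G i) ^ pr * L) := by
        intro i hi
        have hin : i ≤ n := by simpa [Nat.lt_succ_iff] using hi
        calc (∫⁻ t in Ioc (x i) (x (i+1)), (‖f t‖₊ : ℝ≥0∞) ^ qr)
            ≤ ∫⁻ _ in Ioc (x i) (x (i+1)), (G i * L ^ e) ^ qr := by
              refine setLIntegral_mono' measurableSet_Ioc fun t ht => ?_
              exact ENNReal.rpow_le_rpow (key i hin t (Ioc_subset_Icc_self ht)) hqr0.le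
          _ = (G i * L ^ e) ^ qr * volume (Ioc (x i) (x (i+1))) := setLIntegral_const _ _
          _ ≤ (G i * L ^ e) ^ qr * L := by
              refine mul_le_mul' le_rfl ?_
              rw [Real.volume_Ioc]
              exact ENNReal.ofReal_le_ofReal (hgap i hin)
          _ = (G i) ^ qr * L ^ (e * qr) * L := by
              rw [ENNReal.mul_rpow_of_nonneg _ _ hqr0.le, ← ENNReal.rpow_mul]
          _ ≤ (G i) ^ pr * L ^ (e * qr) * L := by
              refine mul_le_mul' (mul_le_mul' ?_ le_rfl) le_rfl
              exact ENNReal.rpow_le_rpow_of_exponent_ge (hGle i hin) hprqr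
          _ = L ^ (e * qr) * ((G i) ^ pr * L) := by ring
      calc (∑ i ∈ Finset.range (n+1), ∫⁻ t in Ioc (x i) (x (i+1)), (‖f t‖₊ : ℝ≥0∞) ^ qr)
          ≤ ∑ i ∈ Finset.range (n+1), L ^ (e * qr) * ((G i) ^ pr * L) :=
            Finset.sum_le_sum hterm
        _ = L ^ (e * qr) * ((∑ i ∈ Finset.range (n+1), (G i) ^ pr) * L) := by
            rw [← Finset.mul_sum, ← Finset.sum_mul]
        _ ≤ L ^ (e * qr) * (1 * L) := by
            exact mul_le_mul' le_rfl (mul_le_mul' hgsum le_rfl)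
        _ = L ^ (e * qr) * L := by rw [one_mul]
    calc (∫⁻ t, (‖f t‖₊ : ℝ≥0∞) ^ qr ∂mu01) ^ (1/qr)
        ≤ (L ^ (e * qr) * L) ^ (1/qr) :=
          ENNReal.rpow_le_rpow hstep (by positivity)
      _ = ENNReal.ofReal (ℓ ^ (1 - (1/p).toReal + (1/q).toReal)) := by
          have hme : L ^ (e * qr) * L = L ^ (e * qr + 1) := by
            rw [ENNReal.rpow_add_of_nonneg _ _ (mul_nonneg he0 hqr0.le) zero_le_one,
              ENNReal.rpow_one]
          rw [hme, ← ENNReal.rpow_mul]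
          have hqe : (1/q).toReal = 1/qr := by rw [one_div, one_div, ENNReal.toReal_inv]
          have : (e * qr + 1) * (1 / qr) = 1 - (1/p).toReal + (1/q).toReal := by
            rw [hqe, he]; field_simp
          rw [this, hL, ENNReal.ofReal_rpow_of_pos hlpos]

lemma mu01_univ : mu01 univ = 1 := by
  rw [mu01, Measure.restrict_apply_univ, Real.volume_Icc]
  norm_num

lemma sob_g_le (p : ℝ≥0∞) (hp : 1 ≤ p) (f g : ℝ → ℝ) (h : sobNorm p f g ≤ 1) :
    eLpNorm g p mu01 ≤ 1 := by
  by_cases hptop : p = ∞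
  · rw [sobNorm, if_pos hptop] at h
    rw [hptop]
    exact (max_le_iff.mp h).2
  · have hp0 : p ≠ 0 := by intro h0; rw [h0] at hp; exact absurd hp (by simp)
    have hpr0 : 0 < p.toReal := ENNReal.toReal_pos hp0 hptop
    rw [sobNorm, if_neg hptop] at h
    have h2 := ENNReal.rpow_le_rpow h hpr0.le
    rw [← ENNReal.rpow_mul, one_div, inv_mul_cancel₀ (ne_of_gt hpr0), ENNReal.rpow_one,
      ENNReal.one_rpow] at h2
    have h3 : eLpNorm g p mu01 ^ p.toReal ≤ 1 := le_trans le_add_self h2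
    calc eLpNorm g p mu01 = (eLpNorm g p mu01 ^ p.toReal) ^ (1/p.toReal) := by
          rw [← ENNReal.rpow_mul, mul_one_div, div_self (ne_of_gt hpr0), ENNReal.rpow_one]
      _ ≤ 1 ^ (1/p.toReal) := ENNReal.rpow_le_rpow h3 (by positivity)
      _ = 1 := ENNReal.one_rpow _

lemma lower (p q : ℝ≥0∞) (hp : 1 ≤ p) (hpq : p ≤ q) (n : ℕ) (hn : 1 ≤ n)
    (x : ℕ → ℝ) (hx0 : x 0 = 0) (hx1 : x (n+1) = 1)
    (hxm : ∀ i j, i ≤ j → j ≤ n+1 → x i ≤ x j)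
    (ℓ : ℝ) (hlpos : 0 < ℓ) (hl1 : ℓ ≤ 1)
    (j : ℕ) (hj : j ≤ n) (hjl : x (j+1) - x j = ℓ) :
    ENNReal.ofReal ((1/32) * ℓ ^ (1 - (1/p).toReal + (1/q).toReal)) ≤ sobRadius p q n x := by
  have hq : 1 ≤ q := hp.trans hpq
  set ep : ℝ := (1/p).toReal with hep
  have hep0 : 0 ≤ ep := ENNReal.toReal_nonneg
  have hep1 : ep ≤ 1 := by
    have h1 : 1/p ≤ 1 := by rw [one_div]; exact ENNReal.inv_le_one.mpr hp
    calc ep ≤ (1:ℝ≥0∞).toReal := ENNReal.toReal_mono ENNReal.one_ne_top h1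
      _ = 1 := by simp
  set a : ℝ := x j with ha
  set b : ℝ := x (j+1) with hb
  have ha0 : 0 ≤ a := hx0 ▸ hxm 0 j (Nat.zero_le _) (by omega)
  have hb1 : b ≤ 1 := hx1 ▸ hxm (j+1) (n+1) (by omega) le_rfl
  have hab : a < b := by rw [ha, hb]; linarith
  set m : ℝ := (a + b)/2 with hm
  have ham : a < m := by rw [hm]; linarith
  have hmb : m < b := by rw [hm]; linarith
  set β : ℝ := ℓ ^ (-ep) / 4 with hβ
  have hβ0 : 0 < β := by
    rw [hβ]; positivity
  set f : ℝ → ℝ := fun t => β * max 0 (min (t - a) (b - t)) with hf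
  set g : ℝ → ℝ := fun t => if t ∈ Ioc a m then β else if t ∈ Ioc m b then -β else 0 with hg
  -- basic values of f
  have hf_left : ∀ t, t ≤ a → f t = 0 := by
    intro t ht
    rw [hf]
    simp only
    rw [max_eq_left ((min_le_left _ _).trans (by linarith)), mul_zero]
  have hf_right : ∀ t, b ≤ t → f t = 0 := by
    intro t ht
    rw [hf]
    simp only
    rw [max_eq_left ((min_le_right _ _).trans (by linarith)), mul_zero]
  have hf0 : f 0 = 0 := hf_left 0 ha0
  -- integrability of g
  have hgeq : g = (Ioc a m).indicator (fun _ => β) + (Ioc m b).indicator (fun _ => -β) := by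
    funext t
    by_cases h1 : t ∈ Ioc a m
    · have h2 : t ∉ Ioc m b := fun h => absurd h1.2 (not_le.mpr h.1)
      rw [hg]
      simp only [Pi.add_apply, indicator_of_mem h1, indicator_of_notMem h2, if_pos h1, add_zero]
    · by_cases h2 : t ∈ Ioc m b
      · rw [hg]
        simp only [Pi.add_apply, indicator_of_notMem h1, indicator_of_mem h2, if_neg h1,
          if_pos h2, zero_add]
      · rw [hg]
        simp only [Pi.add_apply, indicator_of_notMem h1, indicator_of_notMem h2, if_neg h1,
          if_neg h2, add_zero]
  have hgInt : Integrable g volume := by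
    rw [hgeq]
    exact ((integrable_indicator_iff measurableSet_Ioc).mpr
        (integrableOn_const measure_Ioc_lt_top.ne)).add
      ((integrable_indicator_iff measurableSet_Ioc).mpr
        (integrableOn_const measure_Ioc_lt_top.ne))
  have hgi : ∀ c d : ℝ, IntervalIntegrable g volume c d := fun c d => hgInt.intervalIntegrable
  -- piecewise integral computation
  have hconst : ∀ c d k : ℝ, c ≤ d → (∀ t ∈ Ioc c d, g t = k) →
      (∫ t in c..d, g t) = k * (d - c) := by
    intro c d k hcd hk
    have h1 : ∫ t in c..d, g t = ∫ _ in c..d, k :=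
      intervalIntegral.integral_congr_ae (Filter.Eventually.of_forall
        (fun t ht => hk t (by rwa [uIoc_of_le hcd] at ht)))
    rw [h1, intervalIntegral.integral_const, smul_eq_mul, mul_comm]
  have hI0a : (∫ t in (0:ℝ)..a, g t) = 0 := by
    rw [hconst 0 a 0 ha0 ?_, zero_mul]
    intro t ht
    rw [hg]
    simp only
    rw [if_neg (fun h => absurd h.1 (not_lt.mpr ht.2)),
      if_neg (fun h => absurd h.1 (not_lt.mpr (ht.2.trans ham.le)))]
  have hIam : (∫ t in a..m, g t) = β * (m - a) := by
    refine hconst a m β ham.le fun t ht => ?_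
    rw [hg]; simp only; rw [if_pos ht]
  have hImb : (∫ t in m..b, g t) = -β * (b - m) := by
    refine hconst m b (-β) hmb.le fun t ht => ?_
    rw [hg]; simp only
    rw [if_neg (fun h => absurd h.2 (not_le.mpr ht.1)), if_pos ht]
  have hI0m : (∫ t in (0:ℝ)..m, g t) = β * (m - a) := by
    rw [← intervalIntegral.integral_add_adjacent_intervals (hgi 0 a) (hgi a m), hI0a, hIam,
      zero_add]
  have hI0b : (∫ t in (0:ℝ)..b, g t) = 0 := by
    rw [← intervalIntegral.integral_add_adjacent_intervals (hgi 0 m) (hgi m b), hI0m, hImb]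
    rw [hm]; ring
  have hF : ∀ w ∈ Icc (0:ℝ) 1, (∫ t in (0:ℝ)..w, g t) = f w := by
    intro w hw
    rcases le_or_gt w a with hwa | hwa
    · rw [hf_left w hwa]
      rw [hconst 0 w 0 hw.1 ?_, zero_mul]
      intro t ht
      rw [hg]; simp only
      rw [if_neg (fun h => absurd h.1 (not_lt.mpr (ht.2.trans hwa))),
        if_neg (fun h => absurd h.1 (not_lt.mpr ((ht.2.trans hwa).trans ham.le)))]
    · rcases le_or_gt w m with hwm | hwm
      · rw [← intervalIntegral.integral_add_adjacent_intervals (hgi 0 a) (hgi a w), hI0a,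
          zero_add, hconst a w β hwa.le ?_]
        · rw [hf]; simp only
          rw [min_eq_left (by rw [hm] at hwm; linarith), max_eq_right (by linarith)]
        · intro t ht
          rw [hg]; simp only
          rw [if_pos ⟨ht.1, ht.2.trans hwm⟩]
      · rcases le_or_gt w b with hwb | hwb
        · rw [← intervalIntegral.integral_add_adjacent_intervals (hgi 0 m) (hgi m w), hI0m,
            hconst m w (-β) hwm.le ?_]
          · rw [hf]; simp only
            rw [min_eq_right (by rw [hm] at hwm; linarith), max_eq_right (by linarith)]
            rw [hm]; ring
          · intro t ht
            rw [hg]; simp only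
            rw [if_neg (fun h => absurd h.2 (not_le.mpr ht.1)), if_pos ⟨ht.1, ht.2.trans hwb⟩]
        · rw [← intervalIntegral.integral_add_adjacent_intervals (hgi 0 b) (hgi b w), hI0b,
            zero_add, hf_right w hwb.le, hconst b w 0 hwb.le ?_, zero_mul]
          intro t ht
          rw [hg]; simp only
          rw [if_neg (fun h => absurd (h.2.trans hmb.le) (not_le.mpr ht.1)),
            if_neg (fun h => absurd h.2 (not_le.mpr ht.1))]
  have hW : IsW11 f g := ⟨hgi 0 1, fun w hw => by rw [hf0, zero_add, hF w hw]⟩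
  -- interpolation nodes vanish
  have hfz : ∀ i, 1 ≤ i → i ≤ n → f (x i) = 0 := by
    intro i _ hin
    rcases le_or_gt i j with hij | hij
    · exact hf_left _ (hxm i j hij (by omega))
    · exact hf_right _ (hxm (j+1) i hij (by omega))
  -- bounds on f and g
  have hmul : ℓ ^ (-ep) * ℓ = ℓ ^ (1 - ep) := by
    rw [show (1:ℝ) - ep = -ep + 1 by ring, Real.rpow_add hlpos, Real.rpow_one]
  have hfbd : ∀ t : ℝ, ‖f t‖ ≤ ℓ ^ (1-ep) / 8 := by
    intro t
    rw [hf]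
    simp only [Real.norm_eq_abs]
    have h1 : 0 ≤ max 0 (min (t-a) (b-t)) := le_max_left _ _
    rw [abs_of_nonneg (mul_nonneg hβ0.le h1)]
    have h2 : max 0 (min (t-a) (b-t)) ≤ ℓ/2 := by
      refine max_le (by linarith) ?_
      rcases le_total (t-a) (b-t) with h | h
      · rw [min_eq_left h]; linarith
      · rw [min_eq_right h]; linarith
    calc β * max 0 (min (t-a) (b-t)) ≤ β * (ℓ/2) :=
          mul_le_mul_of_nonneg_left h2 hβ0.le
      _ = (ℓ ^ (-ep) * ℓ)/8 := by rw [hβ]; ring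
      _ = ℓ ^ (1-ep) / 8 := by rw [hmul]
  have hrle1 : ℓ ^ (1-ep) ≤ 1 := Real.rpow_le_one hlpos.le hl1 (by linarith)
  have hf18 : ∀ t : ℝ, ‖f t‖ ≤ 1/8 := fun t => (hfbd t).trans (by linarith)
  have hgb : ∀ t : ℝ, ‖g t‖ ≤ β := by
    intro t
    rw [hg]
    simp only [Real.norm_eq_abs]
    split_ifs with h1 h2
    · rw [abs_of_pos hβ0]
    · rw [abs_neg, abs_of_pos hβ0]
    · rw [abs_zero]; exact hβ0.le
  have hssab : Ioc a b ⊆ Icc (0:ℝ) 1 := fun t ht => ⟨ha0.trans ht.1.le, ht.2.trans hb1⟩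
  have hmIoc : mu01 (Ioc a b) = ENNReal.ofReal ℓ := by
    rw [mu01, Measure.restrict_apply measurableSet_Ioc, inter_eq_left.mpr hssab,
      Real.volume_Ioc, hjl]
  have hgind : ∀ t : ℝ, ‖g t‖ ≤ ‖(Ioc a b).indicator (fun _ => β) t‖ := by
    intro t
    by_cases h1 : t ∈ Ioc a m
    · have hmem : t ∈ Ioc a b := ⟨h1.1, h1.2.trans hmb.le⟩
      rw [Set.indicator_of_mem hmem, Real.norm_eq_abs]
      exact (hgb t).trans (le_abs_self β)
    · by_cases h2 : t ∈ Ioc m b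
      · have hmem : t ∈ Ioc a b := ⟨ham.trans h2.1, h2.2⟩
        rw [Set.indicator_of_mem hmem, Real.norm_eq_abs]
        exact (hgb t).trans (le_abs_self β)
      · rw [hg]
        simp only [if_neg h1, if_neg h2, norm_zero]
        exact norm_nonneg _
  have hsob : sobNorm p f g ≤ 1 := by
    by_cases hptop : p = ∞
    · rw [sobNorm, if_pos hptop]
      have hepz : ep = 0 := by rw [hep, hptop]; simp
      have hβ14 : β ≤ 1/4 := by
        rw [hβ, hepz, neg_zero, Real.rpow_zero]
      refine max_le ?_ ?_
      · refine le_trans (eLpNorm_le_of_ae_bound (C := 1/8) (ae_of_all _ hf18)) ?_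
        rw [mu01_univ, ENNReal.one_rpow, one_mul]
        exact ENNReal.ofReal_le_one.mpr (by norm_num)
      · refine le_trans (eLpNorm_le_of_ae_bound (C := 1/4)
          (ae_of_all _ (fun t => (hgb t).trans hβ14))) ?_
        rw [mu01_univ, ENNReal.one_rpow, one_mul]
        exact ENNReal.ofReal_le_one.mpr (by norm_num)
    · have hp0 : p ≠ 0 := by intro h0; rw [h0] at hp; exact absurd hp (by simp)
      have hpr0 : 0 < p.toReal := ENNReal.toReal_pos hp0 hptop
      have hpr1 : 1 ≤ p.toReal := by
        rw [← ENNReal.toReal_one]; exact ENNReal.toReal_mono hptop hp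
      have hepeq : ep = 1/p.toReal := by rw [hep, one_div, one_div, ENNReal.toReal_inv]
      rw [sobNorm, if_neg hptop]
      have hA : eLpNorm f p mu01 ≤ ENNReal.ofReal (1/2) := by
        refine le_trans (eLpNorm_le_of_ae_bound (C := 1/8) (ae_of_all _ hf18)) ?_
        rw [mu01_univ, ENNReal.one_rpow, one_mul]
        exact ENNReal.ofReal_le_ofReal (by norm_num)
      have hB : eLpNorm g p mu01 ≤ ENNReal.ofReal (1/2) := by
        refine le_trans (eLpNorm_mono hgind) ?_
        rw [eLpNorm_indicator_const measurableSet_Ioc hp0 hptop, hmIoc]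
        have h1 : ‖β‖ₑ = ENNReal.ofReal β := by
          rw [← ofReal_norm, Real.norm_eq_abs, abs_of_pos hβ0]
        rw [h1, ENNReal.ofReal_rpow_of_pos hlpos, ← ENNReal.ofReal_mul hβ0.le]
        refine ENNReal.ofReal_le_ofReal ?_
        have h2 : ℓ ^ (-ep) * ℓ ^ ep = 1 := by
          rw [← Real.rpow_add hlpos]; simp
        calc β * ℓ ^ (1/p.toReal) = (ℓ ^ (-ep) * ℓ ^ ep)/4 := by
              rw [hβ, ← hepeq]; ring
          _ = 1/4 := by rw [h2]
          _ ≤ 1/2 := by norm_num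
      have hhalf : ∀ X : ℝ≥0∞, X ≤ ENNReal.ofReal (1/2) →
          X ^ p.toReal ≤ ENNReal.ofReal (1/2) := by
        intro X hX
        calc X ^ p.toReal ≤ ENNReal.ofReal (1/2) ^ p.toReal :=
              ENNReal.rpow_le_rpow hX hpr0.le
          _ = ENNReal.ofReal ((1/2) ^ p.toReal) := ENNReal.ofReal_rpow_of_pos (by norm_num)
          _ ≤ ENNReal.ofReal (1/2) := by
              refine ENNReal.ofReal_le_ofReal ?_
              calc (1/2:ℝ) ^ p.toReal ≤ (1/2:ℝ) ^ (1:ℝ) :=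
                    Real.rpow_le_rpow_of_exponent_ge (by norm_num) (by norm_num) hpr1
                _ = 1/2 := Real.rpow_one _
      calc (eLpNorm f p mu01 ^ p.toReal + eLpNorm g p mu01 ^ p.toReal) ^ (1/p.toReal)
          ≤ (ENNReal.ofReal (1/2) + ENNReal.ofReal (1/2)) ^ (1/p.toReal) :=
            ENNReal.rpow_le_rpow (add_le_add (hhalf _ hA) (hhalf _ hB)) (by positivity)
        _ = 1 := by
            rw [← ENNReal.ofReal_add (by norm_num) (by norm_num)]
            norm_num
  -- lower bound for the L^q norm of f
  set c' : ℝ := a + ℓ/4 with hc'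
  set d' : ℝ := b - ℓ/4 with hd'
  have hcd : c' ≤ d' := by rw [hc', hd']; linarith
  have hsubcd : Icc c' d' ⊆ Icc (0:ℝ) 1 := by
    intro t ht
    have h1 := ht.1
    have h2 := ht.2
    rw [hc'] at h1
    rw [hd'] at h2
    exact ⟨by linarith, by linarith⟩
  have hdmc : d' - c' = ℓ/2 := by rw [hd', hc']; linarith
  have hmcd : mu01 (Icc c' d') = ENNReal.ofReal (ℓ/2) := by
    rw [mu01, Measure.restrict_apply measurableSet_Icc, inter_eq_left.mpr hsubcd,
      Real.volume_Icc, hdmc]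
  have hfind : ∀ t : ℝ, ‖(Icc c' d').indicator (fun _ => β * (ℓ/4)) t‖ ≤ ‖f t‖ := by
    intro t
    by_cases h1 : t ∈ Icc c' d'
    · rw [indicator_of_mem h1]
      have h2 : ℓ/4 ≤ min (t - a) (b - t) := by
        refine le_min ?_ ?_
        · have := h1.1; rw [hc'] at this; linarith
        · have := h1.2; rw [hd'] at this; linarith
      have h0min : 0 ≤ min (t - a) (b - t) := le_trans (by linarith) h2
      have h3 : f t = β * min (t-a) (b-t) := by
        rw [hf]
        simp only
        rw [max_eq_right h0min]
      rw [Real.norm_eq_abs, Real.norm_eq_abs, h3,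
        abs_of_nonneg (mul_nonneg hβ0.le h0min), abs_of_nonneg (by positivity)]
      exact mul_le_mul_of_nonneg_left h2 hβ0.le
    · rw [indicator_of_notMem h1, norm_zero]
      exact norm_nonneg _
  have hβℓ : ‖β * (ℓ/4)‖ₑ = ENNReal.ofReal (β * (ℓ/4)) := by
    rw [← ofReal_norm, Real.norm_eq_abs, abs_of_pos (by positivity)]
  have hb4 : β * (ℓ/4) = ℓ ^ (1-ep)/16 := by
    rw [hβ, ← hmul]; ring
  have hflow : ENNReal.ofReal ((1/32) * ℓ ^ (1 - ep + (1/q).toReal)) ≤ eLpNorm f q mu01 := by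
    refine le_trans ?_ (eLpNorm_mono hfind)
    by_cases hqtop : q = ∞
    · rw [hqtop, eLpNorm_exponent_top, eLpNormEssSup_indicator_const_eq _ _ ?_]
      · rw [hβℓ]
        refine ENNReal.ofReal_le_ofReal ?_
        rw [(by simp : (1/(⊤:ℝ≥0∞)).toReal = 0), add_zero, hb4]
        have := Real.rpow_nonneg hlpos.le (1-ep)
        linarith
      · rw [hmcd, Ne, ENNReal.ofReal_eq_zero, not_le]
        linarith
    · have hq0 : q ≠ 0 := by intro h0; rw [h0] at hq; exact absurd hq (by simp)
      have hqr0 : 0 < q.toReal := ENNReal.toReal_pos hq0 hqtop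
      have hqr1 : 1 ≤ q.toReal := by
        rw [← ENNReal.toReal_one]; exact ENNReal.toReal_mono hqtop hq
      rw [eLpNorm_indicator_const measurableSet_Icc hq0 hqtop, hmcd, hβℓ,
        ENNReal.ofReal_rpow_of_pos (by linarith), ← ENNReal.ofReal_mul (by positivity)]
      refine ENNReal.ofReal_le_ofReal ?_
      have hqe : (1/q).toReal = 1/q.toReal := by rw [one_div, one_div, ENNReal.toReal_inv]
      rw [hqe, hb4]
      set e' : ℝ := 1/q.toReal with he'
      have he'0 : 0 < e' := by positivity
      have he'1 : e' ≤ 1 := by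
        rw [he', div_le_one hqr0]; exact hqr1
      have h2 : ℓ ^ e' / 2 ≤ (ℓ/2) ^ e' := by
        rw [Real.div_rpow hlpos.le (by norm_num)]
        have h3 : (2:ℝ) ^ e' ≤ 2 := by
          calc (2:ℝ) ^ e' ≤ 2 ^ (1:ℝ) :=
                Real.rpow_le_rpow_of_exponent_le (by norm_num) he'1
            _ = 2 := Real.rpow_one 2
        have h4 : (0:ℝ) < 2 ^ e' := by positivity
        exact div_le_div_of_nonneg_left (Real.rpow_nonneg hlpos.le e') h4 h3
      have hadd : ℓ ^ (1-ep) * ℓ ^ e' = ℓ ^ (1-ep+e') := by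
        rw [← Real.rpow_add hlpos]
      rw [← hadd]
      have hstep : ℓ^(1-ep)/16 * (ℓ^e'/2) ≤ ℓ^(1-ep)/16 * (ℓ/2)^e' :=
        mul_le_mul_of_nonneg_left h2
          (div_nonneg (Real.rpow_nonneg hlpos.le (1-ep)) (by norm_num))
      calc 1/32 * (ℓ^(1-ep) * ℓ^e') = ℓ^(1-ep)/16 * (ℓ^e'/2) := by ring
        _ ≤ ℓ^(1-ep)/16 * (ℓ/2)^e' := hstep
  have hsup : eLpNorm f q mu01 ≤ sobRadius p q n x :=
    le_iSup_of_le f (le_iSup_of_le g (le_iSup_of_le ⟨hW, hsob, hfz⟩ le_rfl))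
  exact le_trans hflow hsup


theorem stmt0 (p q : ℝ≥0∞) (hp : 1 ≤ p) (hpq : p ≤ q) :
    ∃ c C : ℝ, 0 < c ∧ 0 < C ∧
      ∀ n : ℕ, 1 ≤ n → ∀ x : ℕ → ℝ,
        x 0 = 0 → x (n+1) = 1 → (∀ i ≤ n, x i ≤ x (i+1)) →
        ∀ ℓ : ℝ,
          ℓ = (Finset.range (n+1)).sup'
                (Finset.nonempty_range_iff.mpr (Nat.succ_ne_zero n))
                (fun i => x (i+1) - x i) →
          ENNReal.ofReal (c * ℓ ^ (1 - (1/p).toReal + (1/q).toReal))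
              ≤ sobRadius p q n x ∧
            sobRadius p q n x
              ≤ ENNReal.ofReal (C * ℓ ^ (1 - (1/p).toReal + (1/q).toReal)) := by
  refine ⟨1/32, 1, by norm_num, by norm_num, ?_⟩
  intro n hn x hx0 hx1 hmono ℓ hℓ
  have hxm : ∀ i j, i ≤ j → j ≤ n+1 → x i ≤ x j :=
    xmono x (n+1) (fun m hm => hmono m (Nat.lt_succ_iff.mp hm))
  have hgap : ∀ i, i ≤ n → x (i+1) - x i ≤ ℓ := by
    intro i hi
    rw [hℓ]
    exact Finset.le_sup' (fun i => x (i+1) - x i) (Finset.mem_range.mpr (Nat.lt_succ_of_le hi))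
  obtain ⟨jj, hjjmem, hjj⟩ := Finset.exists_mem_eq_sup'
    (Finset.nonempty_range_iff.mpr (Nat.succ_ne_zero n)) (fun i => x (i+1) - x i)
  have hjn : jj ≤ n := by have := Finset.mem_range.mp hjjmem; omega
  have hjl : x (jj+1) - x jj = ℓ := by rw [hℓ, hjj]
  have hl1 : ℓ ≤ 1 := by
    rw [← hjl]
    have h1 := hxm 0 jj (Nat.zero_le _) (by omega)
    have h2 := hxm (jj+1) (n+1) (by omega) le_rfl
    rw [hx0] at h1
    rw [hx1] at h2
    linarith
  have hlpos : 0 < ℓ := by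
    have hsum : ∑ i ∈ Finset.range (n+1), (x (i+1) - x i) = 1 := by
      rw [Finset.sum_range_sub x, hx1, hx0]
      ring
    by_contra h
    push_neg at h
    have hle : ∑ i ∈ Finset.range (n+1), (x (i+1) - x i)
        ≤ ∑ _i ∈ Finset.range (n+1), (0:ℝ) := by
      refine Finset.sum_le_sum fun i hi => ?_
      exact (hgap i (by have := Finset.mem_range.mp hi; omega)).trans h
    rw [hsum, Finset.sum_const, smul_zero] at hle
    linarith
  constructor
  · exact lower p q hp hpq n hn x hx0 hx1 hxm ℓ hlpos hl1 jj hjn hjl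
  · refine iSup_le fun f => iSup_le fun g => iSup_le fun hfg => ?_
    obtain ⟨hW, hnorm, hfz⟩ := hfg
    rw [one_mul]
    exact upper p q hp hpq n hn x hx0 hx1 hxm ℓ hlpos hgap f g hW
      (sob_g_le p hp f g hnorm) hfz
end

section
/- Let 1 ≤ p ≤ q ≤ ∞, let n ≥ 1 and let 0 = x_0 ≤ x_1 ≤ … ≤ x_n ≤ x_{n+1} = 1. Set ℓ = max_{0 ≤ i ≤ n} (x_{i+1} − x_i). Then every f ∈ W^1_p([0,1]) with f(x_i) = 0 for all 1 ≤ i ≤ n satisfies ‖f‖_{L_q([0,1])} ≤ ℓ^{1 − 1/p + 1/q} · ‖f′‖_{L_p([0,1])}. -/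
open MeasureTheory Set
open scoped ENNReal

lemma sum_rpow_le_rpow_sum' {ι : Type*} (s : Finset ι) (a : ι → ℝ≥0∞) {r : ℝ} (hr : 1 ≤ r) :
    ∑ i ∈ s, a i ^ r ≤ (∑ i ∈ s, a i) ^ r := by
  classical
  induction s using Finset.induction with
  | empty => simp [ENNReal.zero_rpow_of_pos (lt_of_lt_of_le one_pos hr)]
  | insert _ _ hx ih =>
    rw [Finset.sum_insert hx, Finset.sum_insert hx]
    exact le_trans (add_le_add_right ih _) (ENNReal.add_rpow_le_rpow_add _ _ hr)

lemma chain_le' (x : ℕ → ℝ) (i : ℕ) : ∀ j, i ≤ j → (∀ k, i ≤ k → k < j → x k ≤ x (k+1)) →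
    x i ≤ x j := by
  intro j
  induction j with
  | zero => intro h _; exact le_of_eq (by rw [Nat.le_zero.mp h])
  | succ j ih =>
    intro hij h
    by_cases hij' : i ≤ j
    · exact (ih hij' fun k hk hk' => h k hk (hk'.trans j.lt_succ_self)).trans
        (h j hij' j.lt_succ_self)
    · have : i = j + 1 := by omega
      simp [this]

lemma union_Ioc' (x : ℕ → ℝ) : ∀ k : ℕ, (∀ i < k, x i ≤ x (i+1)) →
    (⋃ i ∈ Finset.range k, Ioc (x i) (x (i+1))) = Ioc (x 0) (x k) := by
  intro k
  induction k with
  | zero => simp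
  | succ k ih =>
    intro hm
    have h1 : ∀ i < k, x i ≤ x (i+1) := fun i hi => hm i (hi.trans (Nat.lt_succ_self k))
    have h0k : x 0 ≤ x k := chain_le' x 0 k (Nat.zero_le k) (fun i _ hi => h1 i hi)
    rw [Finset.range_add_one, Finset.set_biUnion_insert, ih h1,
      Set.union_comm, Ioc_union_Ioc_eq_Ioc h0k (hm k (Nat.lt_succ_self k))]

lemma pt_bound (f g : ℝ → ℝ) (hint : IntervalIntegrable g volume 0 1)
    (hF : ∀ x ∈ Icc (0:ℝ) 1, f x = f 0 + ∫ t in (0:ℝ)..x, g t)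
    {a b z y : ℝ} (h0a : 0 ≤ a) (hb1 : b ≤ 1)
    (hz : z ∈ Icc a b) (hfz : f z = 0) (hy : y ∈ Icc a b) :
    (‖f y‖₊ : ℝ≥0∞) ≤ ∫⁻ t in Ioc a b, (‖g t‖₊ : ℝ≥0∞) := by
  have hzI : z ∈ Icc (0:ℝ) 1 := ⟨h0a.trans hz.1, hz.2.trans hb1⟩
  have hyI : y ∈ Icc (0:ℝ) 1 := ⟨h0a.trans hy.1, hy.2.trans hb1⟩
  have hsub : ∀ c ∈ Icc (0:ℝ) 1, IntervalIntegrable g volume 0 c := by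
    intro c hc
    refine hint.mono_set ?_
    rw [Set.uIcc_of_le hc.1, Set.uIcc_of_le (zero_le_one)]
    exact Set.Icc_subset_Icc le_rfl hc.2
  have key : f y = ∫ t in z..y, g t := by
    have h1 := hF y hyI
    have h2 := hF z hzI
    rw [hfz] at h2
    have h3 : f y = (∫ t in (0:ℝ)..y, g t) - ∫ t in (0:ℝ)..z, g t := by
      rw [h1]; linarith
    rw [h3, intervalIntegral.integral_interval_sub_left (hsub y hyI) (hsub z hzI)]
  have habsub : ∀ c d, a ≤ c → c ≤ d → d ≤ b →
      (‖∫ t in Ioc c d, g t‖₊ : ℝ≥0∞) ≤ ∫⁻ t in Ioc a b, (‖g t‖₊ : ℝ≥0∞) := by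
    intro c d hac hcd hdb
    refine le_trans (enorm_integral_le_lintegral_enorm _) ?_
    exact lintegral_mono_set (Set.Ioc_subset_Ioc hac hdb)
  rcases le_total z y with h | h
  · rw [key, intervalIntegral.integral_of_le h]
    exact habsub z y hz.1 h hy.2
  · rw [key, intervalIntegral.integral_symm, intervalIntegral.integral_of_le h]
    rw [nnnorm_neg]
    exact habsub y z hy.1 h hz.2

lemma interval_bound (f g : ℝ → ℝ) (p : ℝ≥0∞) (hp : 1 ≤ p)
    (hint : IntervalIntegrable g volume 0 1)
    (hF : ∀ x ∈ Icc (0:ℝ) 1, f x = f 0 + ∫ t in (0:ℝ)..x, g t)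
    {a b z y : ℝ} (h0a : 0 ≤ a) (hb1 : b ≤ 1)
    (hz : z ∈ Icc a b) (hfz : f z = 0) (hy : y ∈ Icc a b) :
    (‖f y‖₊ : ℝ≥0∞) ≤ eLpNorm g p (volume.restrict (Ioc a b))
      * (volume (Ioc a b)) ^ (1 - (1/p).toReal) := by
  have hg : AEStronglyMeasurable g (volume.restrict (Ioc a b)) := by
    have h1 : IntegrableOn g (Ioc 0 1) volume := hint.1
    exact h1.aestronglyMeasurable.mono_measure
      (Measure.restrict_mono (Set.Ioc_subset_Ioc h0a hb1) le_rfl)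
  refine le_trans (pt_bound f g hint hF h0a hb1 hz hfz hy) ?_
  have h := eLpNorm_le_eLpNorm_mul_rpow_measure_univ (p := 1) hp hg
  rw [eLpNorm_one_eq_lintegral_enorm] at h
  rw [Measure.restrict_apply_univ] at h
  refine h.trans (le_of_eq ?_)
  congr 2
  simp [ENNReal.toReal_inv, one_div]

theorem stmt2 (p q : ℝ≥0∞) (hp : 1 ≤ p) (hpq : p ≤ q)
    (n : ℕ) (hn : 1 ≤ n) (x : ℕ → ℝ)
    (hx0 : x 0 = 0) (hx1 : x (n+1) = 1) (hmono : ∀ i ≤ n, x i ≤ x (i+1))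
    (f g : ℝ → ℝ) (hfg : IsW11 f g)
    (hzero : ∀ i, 1 ≤ i → i ≤ n → f (x i) = 0)
    (ℓ : ℝ)
    (hℓ : ℓ = (Finset.range (n+1)).sup'
        (Finset.nonempty_range_iff.mpr (Nat.succ_ne_zero n))
        (fun i => x (i+1) - x i)) :
    eLpNorm f q mu01
      ≤ ENNReal.ofReal (ℓ ^ (1 - (1/p).toReal + (1/q).toReal)) * eLpNorm g p mu01 := by
  obtain ⟨hint, hF⟩ := hfg
  -- basic index facts
  have hxle : ∀ i j, i ≤ j → j ≤ n + 1 → x i ≤ x j := by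
    intro i j hij hjn
    exact chain_le' x i j hij (fun k _ hk => hmono k (by omega))
  have h0xi : ∀ i, i ≤ n + 1 → 0 ≤ x i := fun i hi => hx0 ▸ hxle 0 i (Nat.zero_le i) hi
  have hxi1 : ∀ i, i ≤ n + 1 → x i ≤ 1 := fun i hi => hx1 ▸ hxle i (n+1) hi le_rfl
  have hgap : ∀ i ≤ n, x (i+1) - x i ≤ ℓ := by
    intro i hi
    rw [hℓ]
    exact Finset.le_sup' (fun i => x (i+1) - x i) (Finset.mem_range.mpr (by omega))
  have hℓnn : 0 ≤ ℓ := le_trans (by linarith [hmono 0 (Nat.zero_le n)]) (hgap 0 (Nat.zero_le n))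
  set L : ℝ≥0∞ := ENNReal.ofReal ℓ with hL
  have hvol : ∀ i ≤ n, volume (Ioc (x i) (x (i+1))) ≤ L := by
    intro i hi
    rw [Real.volume_Ioc]
    exact ENNReal.ofReal_le_ofReal (hgap i hi)
  set e1 : ℝ := 1 - (1/p).toReal with he1
  have he1nn : 0 ≤ e1 := by
    rw [he1, sub_nonneg, one_div, ENNReal.toReal_inv]
    rcases eq_or_ne p ∞ with hp' | hp'
    · simp [hp']
    · have h1 : (1:ℝ) ≤ p.toReal := by
        have := ENNReal.toReal_mono hp' hp
        simpa using this
      exact inv_le_one_of_one_le₀ h1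
  set B : ℕ → ℝ≥0∞ := fun i => eLpNorm g p (volume.restrict (Ioc (x i) (x (i+1)))) with hB
  -- pointwise bound on each interval
  have hbound : ∀ i ≤ n, ∀ y ∈ Icc (x i) (x (i+1)), (‖f y‖₊ : ℝ≥0∞) ≤ B i * L ^ e1 := by
    intro i hi y hy
    have hz : x (max 1 i) ∈ Icc (x i) (x (i+1)) := by
      constructor
      · exact hxle i (max 1 i) (le_max_right 1 i) (by omega)
      · exact hxle (max 1 i) (i+1) (by omega) (by omega)
    have hfz : f (x (max 1 i)) = 0 := hzero _ (le_max_left 1 i) (by omega)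
    refine le_trans (interval_bound f g p hp hint hF (h0xi i (by omega))
      (hxi1 (i+1) (by omega)) hz hfz hy) ?_
    exact mul_le_mul_right (ENNReal.rpow_le_rpow (hvol i hi) he1nn) _
  -- covering
  have hcover : ∀ y ∈ Icc (0:ℝ) 1, ∃ i ≤ n, y ∈ Icc (x i) (x (i+1)) := by
    intro y hy
    rcases eq_or_lt_of_le hy.1 with h0 | h0
    · refine ⟨0, Nat.zero_le n, ⟨by rw [hx0, ← h0], ?_⟩⟩
      rw [← h0, ← hx0]
      exact hmono 0 (Nat.zero_le n)
    · have hyIoc : y ∈ Ioc (x 0) (x (n+1)) := ⟨by rw [hx0]; exact h0, by rw [hx1]; exact hy.2⟩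
      rw [← union_Ioc' x (n+1) (fun i hi => hmono i (by omega))] at hyIoc
      simp only [Set.mem_iUnion, Finset.mem_range, exists_prop] at hyIoc
      obtain ⟨i, hi, hyi⟩ := hyIoc
      exact ⟨i, by omega, Set.Ioc_subset_Icc_self hyi⟩
  have hBle : ∀ i ≤ n, B i ≤ eLpNorm g p mu01 := by
    intro i hi
    refine eLpNorm_mono_measure _ (Measure.restrict_mono ?_ le_rfl)
    intro t ht
    exact ⟨le_trans (h0xi i (by omega)) (le_of_lt ht.1), ht.2.trans (hxi1 (i+1) (by omega))⟩
  have hae : ∀ y ∈ Icc (0:ℝ) 1, (‖f y‖₊ : ℝ≥0∞) ≤ eLpNorm g p mu01 * L ^ e1 := by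
    intro y hy
    obtain ⟨i, hi, hyi⟩ := hcover y hy
    exact le_trans (hbound i hi y hyi) (mul_le_mul_left (hBle i hi) _)
  rcases eq_or_ne q ∞ with hq | hq
  · -- q = ∞
    subst hq
    have hC : ENNReal.ofReal (ℓ ^ (1 - (1/p).toReal + (1/(∞:ℝ≥0∞)).toReal)) = L ^ e1 := by
      have h0 : (1/(∞:ℝ≥0∞)).toReal = 0 := by simp
      rw [h0, add_zero, ← he1, hL, ENNReal.ofReal_rpow_of_nonneg hℓnn he1nn]
    rw [hC, eLpNorm_exponent_top, eLpNormEssSup, mul_comm]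
    refine essSup_le_of_ae_le _ ?_
    have : mu01 = volume.restrict (Icc (0:ℝ) 1) := rfl
    rw [this, Filter.EventuallyLE, ae_restrict_iff' measurableSet_Icc]
    exact Filter.Eventually.of_forall hae
  · -- q < ∞
    have hp' : p ≠ ∞ := fun h => hq (top_le_iff.mp (h ▸ hpq))
    have hp0 : p ≠ 0 := fun h => by simp [h] at hp
    have hq0 : q ≠ 0 := fun h => hp0 (le_zero_iff.mp (h ▸ hpq))
    set pr := p.toReal with hprdef
    set qr := q.toReal with hqrdef
    have hpr1 : (1:ℝ) ≤ pr := by simpa using ENNReal.toReal_mono hp' hp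
    have hqr1 : (1:ℝ) ≤ qr := by simpa using ENNReal.toReal_mono hq (hp.trans hpq)
    have hprqr : pr ≤ qr := ENNReal.toReal_mono hq hpq
    have hpr0 : (0:ℝ) < pr := lt_of_lt_of_le one_pos hpr1
    have hqr0 : (0:ℝ) < qr := lt_of_lt_of_le one_pos hqr1
    have hmu : mu01 = volume.restrict (Ioc (0:ℝ) 1) := by
      rw [show mu01 = volume.restrict (Icc (0:ℝ) 1) from rfl]
      exact (Measure.restrict_congr_set Ioc_ae_eq_Icc).symm
    have hdisj : Set.PairwiseDisjoint (↑(Finset.range (n+1)))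
        (fun i => Ioc (x i) (x (i+1))) := by
      have key : ∀ i j, i < j → j ≤ n → Disjoint (Ioc (x i) (x (i+1))) (Ioc (x j) (x (j+1))) := by
        intro i j hij hj
        refine Set.disjoint_left.mpr fun t ht1 ht2 => ?_
        have hle : x (i+1) ≤ x j := hxle (i+1) j hij (by omega)
        exact absurd (ht1.2.trans hle) (not_le.mpr ht2.1)
      intro i hi j hj hij
      simp only [Finset.coe_range, Set.mem_Iio] at hi hj
      rcases lt_or_gt_of_ne hij with h | h
      · exact key i j h (by omega)
      · exact (key j i h (by omega)).symm
    have hsplit : ∀ φ : ℝ → ℝ≥0∞, (∫⁻ t in Ioc (0:ℝ) 1, φ t) =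
        ∑ i ∈ Finset.range (n+1), ∫⁻ t in Ioc (x i) (x (i+1)), φ t := by
      intro φ
      rw [← hx0, ← hx1, ← union_Ioc' x (n+1) (fun i hi => hmono i (by omega))]
      exact lintegral_biUnion_finset hdisj (fun i _ => measurableSet_Ioc) φ
    have hBpr : ∀ i, B i ^ pr = ∫⁻ t in Ioc (x i) (x (i+1)), (‖g t‖₊ : ℝ≥0∞) ^ pr := by
      intro i
      simp only [hB]
      rw [eLpNorm_eq_lintegral_rpow_enorm_toReal hp0 hp', ← ENNReal.rpow_mul, one_div,
        inv_mul_cancel₀ (ne_of_gt hpr0), ENNReal.rpow_one]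
      rfl
    have hGpr : (eLpNorm g p mu01) ^ pr = ∑ i ∈ Finset.range (n+1), B i ^ pr := by
      rw [eLpNorm_eq_lintegral_rpow_enorm_toReal hp0 hp', ← ENNReal.rpow_mul, one_div,
        inv_mul_cancel₀ (ne_of_gt hpr0), ENNReal.rpow_one, hmu, hsplit]
      exact Finset.sum_congr rfl fun i _ => (hBpr i).symm
    have hfint : ∀ i ≤ n, (∫⁻ t in Ioc (x i) (x (i+1)), (‖f t‖₊:ℝ≥0∞)^qr)
        ≤ (B i * L ^ e1)^qr * L := by
      intro i hi
      calc (∫⁻ t in Ioc (x i) (x (i+1)), (‖f t‖₊:ℝ≥0∞)^qr)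
          ≤ ∫⁻ _ in Ioc (x i) (x (i+1)), (B i * L ^ e1)^qr := by
            refine setLIntegral_mono measurable_const ?_
            intro t ht
            exact ENNReal.rpow_le_rpow (hbound i hi t (Set.Ioc_subset_Icc_self ht))
              (le_of_lt hqr0)
        _ = (B i * L^e1)^qr * volume (Ioc (x i) (x (i+1))) := by
            rw [MeasureTheory.setLIntegral_const]
        _ ≤ (B i * L^e1)^qr * L := mul_le_mul_right (hvol i hi) _
    rw [eLpNorm_eq_lintegral_rpow_enorm_toReal hq0 hq, hmu, hsplit]
    have hsum : (∑ i ∈ Finset.range (n+1), ∫⁻ t in Ioc (x i) (x (i+1)), (‖f t‖₊:ℝ≥0∞)^qr)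
        ≤ L ^ (e1 * qr + 1) * ((eLpNorm g p mu01) ^ pr) ^ (qr / pr) := by
      calc (∑ i ∈ Finset.range (n+1), ∫⁻ t in Ioc (x i) (x (i+1)), (‖f t‖₊:ℝ≥0∞)^qr)
          ≤ ∑ i ∈ Finset.range (n+1), (B i * L ^ e1)^qr * L :=
            Finset.sum_le_sum (fun i hi => hfint i (by
              have := Finset.mem_range.mp hi; omega))
        _ = L ^ (e1*qr + 1) * ∑ i ∈ Finset.range (n+1), B i ^ qr := by
            rw [Finset.mul_sum]
            refine Finset.sum_congr rfl fun i _ => ?_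
            rw [ENNReal.mul_rpow_of_nonneg _ _ (le_of_lt hqr0), ← ENNReal.rpow_mul,
              ENNReal.rpow_add_of_nonneg _ _ (by positivity) zero_le_one, ENNReal.rpow_one]
            ring
        _ ≤ L^(e1*qr+1) * (∑ i ∈ Finset.range (n+1), B i ^ pr) ^ (qr/pr) := by
            refine mul_le_mul_right ?_ _
            have hBq : ∀ i, B i ^ qr = (B i ^ pr) ^ (qr/pr) := fun i => by
              rw [← ENNReal.rpow_mul]
              congr 1
              field_simp
            simp_rw [hBq]
            exact sum_rpow_le_rpow_sum' _ _ ((one_le_div hpr0).mpr hprqr)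
        _ = _ := by rw [hGpr]
    refine le_trans (ENNReal.rpow_le_rpow hsum (by positivity : (0:ℝ) ≤ 1/qr)) ?_
    rw [ENNReal.mul_rpow_of_nonneg _ _ (by positivity : (0:ℝ) ≤ 1/qr)]
    have hq1 : (1/q).toReal = 1/qr := by rw [one_div, ENNReal.toReal_inv, one_div]
    have h1 : (e1*qr+1) * (1/qr) = 1 - (1/p).toReal + (1/q).toReal := by
      rw [hq1, he1]
      field_simp
    have hLside : (L^(e1*qr+1))^(1/qr)
        = ENNReal.ofReal (ℓ ^ (1 - (1/p).toReal + (1/q).toReal)) := by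
      rw [← ENNReal.rpow_mul, h1, hL,
        ENNReal.ofReal_rpow_of_nonneg hℓnn (by rw [← h1]; positivity)]
    have hGside : (((eLpNorm g p mu01)^pr)^(qr/pr))^(1/qr) = eLpNorm g p mu01 := by
      rw [← ENNReal.rpow_mul, ← ENNReal.rpow_mul]
      rw [show pr * (qr / pr * (1 / qr)) = 1 from by field_simp, ENNReal.rpow_one]
    rw [hLside, hGside, ← hmu, he1]
end

section
/- Let 1 ≤ q < p ≤ ∞ and define s > 0 by 1/s = 1/q − 1/p. Let n ≥ 1 and let 0 = x_0 ≤ x_1 ≤ … ≤ x_n ≤ x_{n+1} = 1, with ℓ_i = x_{i+1} − x_i for 0 ≤ i ≤ n. Then every f ∈ W^1_p([0,1]) with f(x_i) = 0 for all 1 ≤ i ≤ n satisfies ‖f‖_{L_q([0,1])} ≤ (Σ_{i=0}^n ℓ_i^{s+1})^{1/s} · ‖f′‖_{L_p([0,1])}. -/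
open MeasureTheory Set
open scoped ENNReal

lemma finset_holder {a b : ℕ → ℝ≥0∞} (m : ℕ) {r r' : ℝ} (h : r'.HolderConjugate r) :
    ∑ i ∈ Finset.range m, a i * b i ≤
      (∑ i ∈ Finset.range m, a i ^ r') ^ (1/r') * (∑ i ∈ Finset.range m, b i ^ r) ^ (1/r) := by
  set a' : ℕ → ℝ≥0∞ := fun i => if i ∈ Finset.range m then a i else 0 with ha'
  set b' : ℕ → ℝ≥0∞ := fun i => if i ∈ Finset.range m then b i else 0 with hb'
  have key := ENNReal.lintegral_mul_le_Lp_mul_Lq (Measure.count : Measure ℕ) h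
    (f := a') (g := b') (measurable_of_countable _).aemeasurable
    (measurable_of_countable _).aemeasurable
  rw [lintegral_count, lintegral_count, lintegral_count] at key
  have e1 : ∑' i, (a' * b') i = ∑ i ∈ Finset.range m, a i * b i := by
    rw [tsum_eq_sum (s := Finset.range m)
      (fun i hi => by simp only [Pi.mul_apply, ha', hb', if_neg hi, mul_zero])]
    exact Finset.sum_congr rfl fun i hi => by simp only [Pi.mul_apply, ha', hb', if_pos hi]
  have e2 : ∑' i, a' i ^ r' = ∑ i ∈ Finset.range m, a i ^ r' := by
    rw [tsum_eq_sum (s := Finset.range m)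
      (fun i hi => by simp only [ha', if_neg hi]; exact ENNReal.zero_rpow_of_pos h.pos)]
    exact Finset.sum_congr rfl fun i hi => by simp only [ha', if_pos hi]
  have e3 : ∑' i, b' i ^ r = ∑ i ∈ Finset.range m, b i ^ r := by
    rw [tsum_eq_sum (s := Finset.range m)
      (fun i hi => by simp only [hb', if_neg hi]; exact ENNReal.zero_rpow_of_pos h.symm.pos)]
    exact Finset.sum_congr rfl fun i hi => by simp only [hb', if_pos hi]
  rwa [e1, e2, e3] at key

lemma chain_mono {x : ℕ → ℝ} {n : ℕ} (hmono : ∀ i ≤ n, x i ≤ x (i+1)) :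
    ∀ i j, i ≤ j → j ≤ n+1 → x i ≤ x j := by
  intro i j hij hj
  induction j with
  | zero => simp_all
  | succ k ih =>
    rcases Nat.lt_or_ge i (k+1) with hk | hk
    · exact (ih (Nat.lt_succ_iff.mp hk) (by omega)).trans (hmono k (by omega))
    · have : i = k + 1 := le_antisymm hij hk
      simp [this]

lemma cover_Icc {x : ℕ → ℝ} {n : ℕ} (hmono : ∀ i ≤ n, x i ≤ x (i+1)) :
    Icc (x 0) (x (n+1)) ⊆ ⋃ i ∈ Finset.range (n+1), Icc (x i) (x (i+1)) := by
  induction n with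
  | zero => simp
  | succ m ih =>
    have h2 : ∀ i ≤ m, x i ≤ x (i+1) := fun i hi => hmono i (by omega)
    refine (Icc_subset_Icc_union_Icc (b := x (m+1))).trans ?_
    rw [Finset.range_add_one]
    intro t ht
    rcases ht with ht | ht
    · have := ih h2 ht
      simp only [mem_iUnion, Finset.mem_insert] at this ⊢
      obtain ⟨i, hi, h⟩ := this
      exact ⟨i, Or.inr hi, h⟩
    · simp only [mem_iUnion, Finset.mem_insert]
      exact ⟨m+1, Or.inl rfl, ht⟩

lemma restrict_biUnion_le (μ : Measure ℝ) (A : ℕ → Set ℝ) (m : ℕ) :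
    μ.restrict (⋃ i ∈ Finset.range m, A i) ≤ ∑ i ∈ Finset.range m, μ.restrict (A i) := by
  induction m with
  | zero => simp
  | succ k ih =>
    rw [Finset.range_add_one]
    simp only [Finset.mem_insert, Set.iUnion_iUnion_eq_or_left, Finset.sum_insert
      (Finset.notMem_range_self)]
    calc μ.restrict (A k ∪ ⋃ i ∈ Finset.range k, A i)
        ≤ μ.restrict (A k) + μ.restrict (⋃ i ∈ Finset.range k, A i) := Measure.restrict_union_le _ _
      _ ≤ _ := by exact add_le_add le_rfl ih

lemma restrict_biUnion_Ioo {x : ℕ → ℝ} {n : ℕ} (hmono : ∀ i ≤ n, x i ≤ x (i+1))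
    (μ : Measure ℝ) (m : ℕ) (hm : m ≤ n+1) :
    μ.restrict (⋃ i ∈ Finset.range m, Ioo (x i) (x (i+1)))
      = ∑ i ∈ Finset.range m, μ.restrict (Ioo (x i) (x (i+1))) := by
  induction m with
  | zero => simp
  | succ k ih =>
    rw [Finset.range_add_one]
    simp only [Finset.mem_insert, Set.iUnion_iUnion_eq_or_left, Finset.sum_insert
      (Finset.notMem_range_self)]
    have hmeas : MeasurableSet (⋃ i ∈ Finset.range k, Ioo (x i) (x (i+1))) :=
      MeasurableSet.biUnion (Finset.range k).countable_toSet (fun i _ => measurableSet_Ioo)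
    have hdis : Disjoint (Ioo (x k) (x (k+1))) (⋃ i ∈ Finset.range k, Ioo (x i) (x (i+1))) := by
      refine Set.disjoint_left.mpr ?_
      intro t ht hmem
      simp only [mem_iUnion] at hmem
      obtain ⟨i, hi, h⟩ := hmem
      simp only [Finset.mem_range] at hi
      have : x (i+1) ≤ x k := chain_mono hmono (i+1) k hi (by omega)
      exact absurd (h.2.trans_le this) (not_lt.mpr ht.1.le)
    rw [Measure.restrict_union hdis hmeas, ih (by omega)]

lemma interval_bound_s3 (p q : ℝ≥0∞) (hp1 : 1 ≤ p)
    {a b : ℝ} (hab : a ≤ b) (h0 : 0 ≤ a) (h1 : b ≤ 1)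
    (f g : ℝ → ℝ) (hg_int : IntervalIntegrable g volume 0 1)
    (hf_eq : ∀ x ∈ Icc (0:ℝ) 1, f x = f 0 + ∫ t in (0:ℝ)..x, g t)
    {z : ℝ} (hz : z ∈ Icc a b) (hfz : f z = 0)
    (hGfin : eLpNorm g p (volume.restrict (Icc a b)) ≠ ∞) :
    eLpNorm f q (volume.restrict (Icc a b)) ≤
      ENNReal.ofReal (b - a) ^ (q.toReal⁻¹ + (1 - p.toReal⁻¹))
        * eLpNorm g p (volume.restrict (Icc a b)) := by
  set μi := volume.restrict (Icc a b) with hμi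
  have hsub : Icc a b ⊆ Icc (0:ℝ) 1 := Icc_subset_Icc h0 h1
  have hg_ab : IntervalIntegrable g volume a b :=
    hg_int.mono_set (by rw [uIcc_of_le hab, uIcc_of_le (zero_le_one)]; exact hsub)
  have hInt : IntegrableOn g (Icc a b) volume :=
    (intervalIntegrable_iff_integrableOn_Icc_of_le hab).mp hg_ab
  have hgae : AEStronglyMeasurable g μi := hInt.aestronglyMeasurable
  have huniv : μi Set.univ = ENNReal.ofReal (b - a) := by
    rw [hμi, Measure.restrict_apply_univ, Real.volume_Icc]
  have hp_inv : p.toReal⁻¹ ≤ 1 := by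
    rcases eq_or_ne p ∞ with hp | hp
    · simp [hp]
    · have : 1 ≤ p.toReal := by
        rw [← ENNReal.toReal_one]; exact ENNReal.toReal_mono hp hp1
      exact inv_le_one_of_one_le₀ this
  set D : ℝ≥0∞ := eLpNorm g p μi * ENNReal.ofReal (b - a) ^ (1 - p.toReal⁻¹) with hD
  have hDfin : D ≠ ∞ := by
    apply ENNReal.mul_ne_top hGfin
    exact ENNReal.rpow_ne_top_of_nonneg (by linarith) ENNReal.ofReal_ne_top
  have hcomp : eLpNorm g 1 μi ≤ D := by
    have := eLpNorm_le_eLpNorm_mul_rpow_measure_univ (p := 1) (q := p) hp1 hgae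
    rw [huniv] at this
    simpa [hD, one_div] using this
  -- pointwise bound
  have hpt : ∀ t ∈ Icc a b, |f t| ≤ D.toReal := by
    intro t ht
    have hz01 : z ∈ Icc (0:ℝ) 1 := hsub hz
    have ht01 : t ∈ Icc (0:ℝ) 1 := hsub ht
    have hIz : IntervalIntegrable g volume 0 z :=
      hg_int.mono_set (by rw [uIcc_of_le hz01.1, uIcc_of_le (zero_le_one)]; exact Icc_subset_Icc le_rfl hz01.2)
    have hIzt : IntervalIntegrable g volume z t := by
      apply hg_int.mono_set
      rw [uIcc_of_le (zero_le_one)]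
      exact uIcc_subset_Icc hz01 ht01
    have hft : f t = ∫ u in z..t, g u := by
      have e1 := hf_eq t ht01
      have e2 := hf_eq z hz01
      have := intervalIntegral.integral_add_adjacent_intervals hIz hIzt
      rw [hfz] at e2
      have : ∫ u in z..t, g u = (∫ u in (0:ℝ)..t, g u) - ∫ u in (0:ℝ)..z, g u := by
        rw [← this]; ring
      rw [this, e1]
      linarith
    have h1' : |f t| ≤ ∫ u in Set.uIoc z t, |g u| := by
      rw [hft, ← Real.norm_eq_abs]
      exact (intervalIntegral.norm_integral_le_integral_norm_uIoc).trans
        (le_of_eq (by simp [Real.norm_eq_abs]))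
    have hsub2 : Set.uIoc z t ⊆ Icc a b := by
      exact Set.uIoc_subset_uIcc.trans (uIcc_subset_Icc hz ht)
    have h2' : ∫ u in Set.uIoc z t, |g u| ≤ ∫ u in Icc a b, |g u| := by
      apply setIntegral_mono_set hInt.abs
      · filter_upwards with u using abs_nonneg _
      · exact HasSubset.Subset.eventuallyLE hsub2
    have h3' : ∫ u in Icc a b, |g u| = (eLpNorm g 1 μi).toReal := by
      have := ofReal_integral_norm_eq_lintegral_enorm hInt
      rw [eLpNorm_one_eq_lintegral_enorm, ← this, ENNReal.toReal_ofReal]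
      · simp [Real.norm_eq_abs]
      · positivity
    have h4' : (eLpNorm g 1 μi).toReal ≤ D.toReal :=
      ENNReal.toReal_mono hDfin hcomp
    linarith [h1', h2', h3' ▸ h2']
  have hbound : eLpNorm f q μi ≤ μi Set.univ ^ q.toReal⁻¹ * ENNReal.ofReal D.toReal := by
    apply eLpNorm_le_of_ae_bound
    filter_upwards [ae_restrict_mem measurableSet_Icc] with t ht
    rw [Real.norm_eq_abs]; exact hpt t ht
  rw [huniv, ENNReal.ofReal_toReal hDfin, hD] at hbound
  calc eLpNorm f q μi
      ≤ ENNReal.ofReal (b - a) ^ q.toReal⁻¹ *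
          (eLpNorm g p μi * ENNReal.ofReal (b - a) ^ (1 - p.toReal⁻¹)) := hbound
    _ = ENNReal.ofReal (b - a) ^ (q.toReal⁻¹ + (1 - p.toReal⁻¹)) * eLpNorm g p μi := by
        have hq0 : (0:ℝ) ≤ q.toReal⁻¹ := by positivity
        have hp0 : (0:ℝ) ≤ 1 - p.toReal⁻¹ := by linarith
        rw [ENNReal.rpow_add_of_nonneg _ _ hq0 hp0]
        ring

theorem stmt3 (p q : ℝ≥0∞) (hq : 1 ≤ q) (hqp : q < p) (s : ℝ) (hs : 0 < s)
    (hs' : 1 / s = (1/q).toReal - (1/p).toReal)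
    (n : ℕ) (hn : 1 ≤ n) (x : ℕ → ℝ)
    (hx0 : x 0 = 0) (hx1 : x (n+1) = 1) (hmono : ∀ i ≤ n, x i ≤ x (i+1))
    (f g : ℝ → ℝ) (hfg : IsW11 f g)
    (hzero : ∀ i, 1 ≤ i → i ≤ n → f (x i) = 0) :
    eLpNorm f q mu01
      ≤ ENNReal.ofReal ((∑ i ∈ Finset.range (n+1), (x (i+1) - x i) ^ (s+1)) ^ (1/s))
          * eLpNorm g p mu01 := by
  obtain ⟨hg_int, hf_eq⟩ := hfg
  have hq0 : q ≠ 0 := (lt_of_lt_of_le zero_lt_one hq).ne'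
  have hqtop : q ≠ ∞ := hqp.ne_top
  have hp1 : 1 ≤ p := hq.trans hqp.le
  set q' := q.toReal with hq'def
  have hq'1 : 1 ≤ q' := by
    rw [← ENNReal.toReal_one]; exact ENNReal.toReal_mono hqtop hq
  have hq'pos : 0 < q' := lt_of_lt_of_le zero_lt_one hq'1
  have hch := chain_mono hmono
  have hnn : ∀ i ≤ n, 0 ≤ x i ∧ x (i+1) ≤ 1 := by
    intro i hi
    constructor
    · rw [← hx0]; exact hch 0 i (Nat.zero_le _) (by omega)
    · rw [← hx1]; exact hch (i+1) (n+1) (by omega) le_rfl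
  -- exponent identities
  have hsinv : 1 / s = q'⁻¹ - p.toReal⁻¹ := by
    rw [hs']; rw [one_div, one_div, ENNReal.toReal_inv, ENNReal.toReal_inv]
  set ℓ : ℕ → ℝ := fun i => x (i+1) - x i with hℓ
  have hℓnn : ∀ i ≤ n, 0 ≤ ℓ i := fun i hi => sub_nonneg.mpr (hmono i hi)
  set L : ℕ → ℝ≥0∞ := fun i => ENNReal.ofReal (ℓ i) with hL
  set A := eLpNorm g p mu01 with hA
  set S := ∑ i ∈ Finset.range (n+1), ℓ i ^ (s+1) with hS
  have hSpos : 0 < S := by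
    have hsum1 : ∑ i ∈ Finset.range (n+1), ℓ i = 1 := by
      rw [hℓ]; rw [Finset.sum_range_sub (f := x), hx0, hx1, sub_zero]
    have hex : ∃ i ∈ Finset.range (n+1), 0 < ℓ i := by
      by_contra hcon
      push_neg at hcon
      have : ∑ i ∈ Finset.range (n+1), ℓ i ≤ 0 :=
        Finset.sum_nonpos fun i hi => hcon i hi
      linarith
    obtain ⟨i, hi, hpos⟩ := hex
    refine lt_of_lt_of_le (Real.rpow_pos_of_pos hpos (s+1)) ?_
    exact Finset.single_le_sum (fun j hj => Real.rpow_nonneg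
      (hℓnn j (Nat.lt_succ_iff.mp (Finset.mem_range.mp hj))) _) hi
  have hSL : ∑ i ∈ Finset.range (n+1), L i ^ (s+1) = ENNReal.ofReal S := by
    rw [hS, ENNReal.ofReal_sum_of_nonneg (fun i hi => Real.rpow_nonneg
      (hℓnn i (Nat.lt_succ_iff.mp (Finset.mem_range.mp hi))) _)]
    refine Finset.sum_congr rfl fun i hi => ?_
    rw [hL, ← ENNReal.ofReal_rpow_of_nonneg
      (hℓnn i (Nat.lt_succ_iff.mp (Finset.mem_range.mp hi))) (by linarith)]
  have hconv : ENNReal.ofReal (S ^ (1/s)) =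
      (∑ i ∈ Finset.range (n+1), L i ^ (s+1)) ^ (1/s) := by
    rw [hSL, ← ENNReal.ofReal_rpow_of_nonneg hSpos.le (by positivity)]
  rcases eq_or_ne A ∞ with hAtop | hAfin
  · rw [hconv, hAtop, ENNReal.mul_top]
    · exact le_top
    · rw [hSL]
      exact (ENNReal.rpow_pos (ENNReal.ofReal_pos.mpr hSpos) ENNReal.ofReal_ne_top).ne'
  · -- A finite
    set μI : ℕ → Measure ℝ := fun i => volume.restrict (Icc (x i) (x (i+1))) with hμI
    set G : ℕ → ℝ≥0∞ := fun i => eLpNorm g p (μI i) with hG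
    have hμle : ∀ i ≤ n, μI i ≤ mu01 := fun i hi =>
      Measure.restrict_mono (Icc_subset_Icc (hnn i hi).1 (hnn i hi).2) le_rfl
    have hGA : ∀ i ≤ n, G i ≤ A := fun i hi => eLpNorm_mono_measure _ (hμle i hi)
    have hGfin : ∀ i ≤ n, G i ≠ ∞ := fun i hi => ne_top_of_le_ne_top hAfin (hGA i hi)
    have hFi : ∀ i ≤ n, eLpNorm f q (μI i) ≤ L i ^ (1 + 1/s) * G i := by
      intro i hi
      have hexp : q.toReal⁻¹ + (1 - p.toReal⁻¹) = 1 + 1/s := by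
        rw [hsinv]; ring
      set z : ℝ := if i = 0 then x 1 else x i with hz
      have hzmem : z ∈ Icc (x i) (x (i+1)) := by
        rcases eq_or_ne i 0 with h | h
        · subst h; simp only [hz, if_pos rfl]
          exact ⟨hmono 0 (Nat.zero_le _), le_rfl⟩
        · simp only [hz, if_neg h]; exact ⟨le_rfl, hmono i hi⟩
      have hzzero : f z = 0 := by
        rcases eq_or_ne i 0 with h | h
        · subst h; simp only [hz, if_pos rfl]; exact hzero 1 le_rfl hn
        · simp only [hz, if_neg h]; exact hzero i (Nat.one_le_iff_ne_zero.mpr h) hi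
      have hb := interval_bound_s3 p q hp1 (hmono i hi) (hnn i hi).1 (hnn i hi).2
        f g hg_int hf_eq hzmem hzzero (hGfin i hi)
      rw [hexp] at hb
      exact hb
    have hsplit : eLpNorm f q mu01
        ≤ (∑ i ∈ Finset.range (n+1), (eLpNorm f q (μI i)) ^ q') ^ (1/q') := by
      rw [eLpNorm_eq_lintegral_rpow_enorm_toReal hq0 hqtop]
      refine ENNReal.rpow_le_rpow ?_ (by positivity)
      calc ∫⁻ t, ‖f t‖ₑ ^ q' ∂mu01
          ≤ ∫⁻ t, ‖f t‖ₑ ^ q' ∂(∑ i ∈ Finset.range (n+1), μI i) := by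
            refine lintegral_mono' ?_ le_rfl
            refine le_trans ?_ (restrict_biUnion_le volume (fun i => Icc (x i) (x (i+1))) (n+1))
            unfold mu01
            refine Measure.restrict_mono ?_ le_rfl
            rw [← hx0, ← hx1]
            exact cover_Icc hmono
        _ = ∑ i ∈ Finset.range (n+1), ∫⁻ t, ‖f t‖ₑ ^ q' ∂(μI i) :=
            lintegral_finset_sum_measure _ _ _
        _ = ∑ i ∈ Finset.range (n+1), (eLpNorm f q (μI i)) ^ q' := by
            refine Finset.sum_congr rfl fun i hi => ?_
            rw [eLpNorm_eq_lintegral_rpow_enorm_toReal hq0 hqtop, ← ENNReal.rpow_mul,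
              one_div, inv_mul_cancel₀ (ne_of_gt hq'pos), ENNReal.rpow_one]
    have hmain : eLpNorm f q mu01
        ≤ (∑ i ∈ Finset.range (n+1), (L i ^ ((1+1/s)*q')) * (G i ^ q')) ^ (1/q') := by
      refine hsplit.trans ?_
      refine ENNReal.rpow_le_rpow (Finset.sum_le_sum fun i hi => ?_) (by positivity)
      have hi' : i ≤ n := Nat.lt_succ_iff.mp (Finset.mem_range.mp hi)
      calc (eLpNorm f q (μI i)) ^ q' ≤ (L i ^ (1+1/s) * G i) ^ q' :=
            ENNReal.rpow_le_rpow (hFi i hi') hq'pos.le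
        _ = L i ^ ((1+1/s)*q') * G i ^ q' := by
            rw [ENNReal.mul_rpow_of_nonneg _ _ hq'pos.le, ← ENNReal.rpow_mul]
    rw [hconv]
    rcases eq_or_ne p ∞ with hptop | hptop
    · -- p = ∞
      have hps : p.toReal⁻¹ = 0 := by simp [hptop]
      have hsq : s = q' := by
        have h1 : 1/s = 1/q' := by rw [hsinv, hps, one_div]; ring
        have := congrArg (1 / ·) h1
        simpa [one_div_one_div] using this
      have hexp2 : (1+1/s)*q' = s+1 := by
        rw [hsq]; field_simp
      refine hmain.trans ?_
      calc (∑ i ∈ Finset.range (n+1), L i ^ ((1+1/s)*q') * G i ^ q') ^ (1/q')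
          ≤ (∑ i ∈ Finset.range (n+1), L i ^ (s+1) * A ^ q') ^ (1/q') := by
            refine ENNReal.rpow_le_rpow (Finset.sum_le_sum fun i hi => ?_) (by positivity)
            rw [hexp2]
            exact mul_le_mul_right (ENNReal.rpow_le_rpow
              (hGA i (Nat.lt_succ_iff.mp (Finset.mem_range.mp hi))) hq'pos.le) _
        _ = ((∑ i ∈ Finset.range (n+1), L i ^ (s+1)) * A ^ q') ^ (1/q') := by
            rw [← Finset.sum_mul]
        _ = (∑ i ∈ Finset.range (n+1), L i ^ (s+1)) ^ (1/q') * A := by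
            rw [ENNReal.mul_rpow_of_nonneg _ _ (by positivity), ← ENNReal.rpow_mul,
              mul_one_div, div_self (ne_of_gt hq'pos), ENNReal.rpow_one]
        _ = (∑ i ∈ Finset.range (n+1), L i ^ (s+1)) ^ (1/s) * A := by rw [hsq]
    · -- p finite
      have hp0 : p ≠ 0 := (lt_of_lt_of_le zero_lt_one hp1).ne'
      set p' := p.toReal with hp'def
      have hq'p' : q' < p' := (ENNReal.toReal_lt_toReal hqtop hptop).mpr hqp
      have hp'pos : 0 < p' := hq'pos.trans hq'p'
      have hsinv' : 1/s = 1/q' - 1/p' := by rw [hsinv, one_div, one_div]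
      have hsq' : q' < s := by
        by_contra hcon
        push_neg at hcon
        have h2 : 1/q' ≤ 1/s := one_div_le_one_div_of_le hs hcon
        have h3 : 0 < 1/p' := by positivity
        linarith
      have hconj : (s/q').HolderConjugate (p'/q') := by
        refine Real.holderConjugate_iff.mpr ⟨?_, ?_⟩
        · exact (one_lt_div hq'pos).mpr hsq'
        · rw [inv_div, inv_div]
          have e : q'/s + q'/p' = q' * (1/s) + q' * (1/p') := by ring
          rw [e, hsinv']
          field_simp
          ring
      have hholder := finset_holder (a := fun i => L i ^ ((1+1/s)*q'))
        (b := fun i => G i ^ q') (n+1) hconj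
      rw [one_div_div, one_div_div] at hholder
      have ea : ∀ i, (L i ^ ((1+1/s)*q')) ^ (s/q') = L i ^ (s+1) := by
        intro i
        rw [← ENNReal.rpow_mul]
        congr 1
        field_simp <;> ring
      have eb : ∀ i, (G i ^ q') ^ (p'/q') = G i ^ p' := by
        intro i
        rw [← ENNReal.rpow_mul]
        congr 1
        field_simp
      have hGsum : ∑ i ∈ Finset.range (n+1), G i ^ p' ≤ A ^ p' := by
        have hGpow : ∀ i ∈ Finset.range (n+1), G i ^ p'
            = ∫⁻ t, ‖g t‖ₑ ^ p' ∂(volume.restrict (Ioo (x i) (x (i+1)))) := by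
          intro i hi
          show eLpNorm g p (volume.restrict (Icc (x i) (x (i+1)))) ^ p' = _
          rw [← Measure.restrict_congr_set Ioo_ae_eq_Icc,
            eLpNorm_eq_lintegral_rpow_enorm_toReal hp0 hptop, ← ENNReal.rpow_mul,
            one_div, inv_mul_cancel₀ (ne_of_gt hp'pos), ENNReal.rpow_one]
        rw [Finset.sum_congr rfl hGpow, ← lintegral_finset_sum_measure,
          ← restrict_biUnion_Ioo hmono volume (n+1) le_rfl]
        have hsub : (⋃ i ∈ Finset.range (n+1), Ioo (x i) (x (i+1))) ⊆ Icc (0:ℝ) 1 := by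
          intro t ht
          simp only [mem_iUnion, Finset.mem_range] at ht
          obtain ⟨i, hi, h⟩ := ht
          have hi' : i ≤ n := Nat.lt_succ_iff.mp hi
          exact ⟨(hnn i hi').1.trans h.1.le, h.2.le.trans (hnn i hi').2⟩
        calc ∫⁻ t, ‖g t‖ₑ ^ p'
              ∂(volume.restrict (⋃ i ∈ Finset.range (n+1), Ioo (x i) (x (i+1))))
            ≤ ∫⁻ t, ‖g t‖ₑ ^ p' ∂mu01 := by
              refine lintegral_mono' ?_ le_rfl
              unfold mu01
              exact Measure.restrict_mono hsub le_rfl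
          _ = A ^ p' := by
              rw [hA, eLpNorm_eq_lintegral_rpow_enorm_toReal hp0 hptop, ← ENNReal.rpow_mul,
                one_div, inv_mul_cancel₀ (ne_of_gt hp'pos), ENNReal.rpow_one]
      refine hmain.trans ?_
      calc (∑ i ∈ Finset.range (n+1), L i ^ ((1+1/s)*q') * G i ^ q') ^ (1/q')
          ≤ ((∑ i ∈ Finset.range (n+1), (L i ^ ((1+1/s)*q')) ^ (s/q')) ^ (q'/s)
              * (∑ i ∈ Finset.range (n+1), (G i ^ q') ^ (p'/q')) ^ (q'/p')) ^ (1/q') :=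
            ENNReal.rpow_le_rpow hholder (by positivity)
        _ = ((∑ i ∈ Finset.range (n+1), L i ^ (s+1)) ^ (q'/s)
              * (∑ i ∈ Finset.range (n+1), G i ^ p') ^ (q'/p')) ^ (1/q') := by
            rw [Finset.sum_congr rfl (fun i _ => ea i), Finset.sum_congr rfl (fun i _ => eb i)]
        _ ≤ ((∑ i ∈ Finset.range (n+1), L i ^ (s+1)) ^ (q'/s)
              * (A ^ p') ^ (q'/p')) ^ (1/q') := by
            gcongr
        _ = (∑ i ∈ Finset.range (n+1), L i ^ (s+1)) ^ (1/s) * A := by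
            have e1 : p' * (q'/p') = q' := by field_simp
            rw [← ENNReal.rpow_mul A, e1, ENNReal.mul_rpow_of_nonneg _ _ (by positivity),
              ← ENNReal.rpow_mul, ← ENNReal.rpow_mul]
            congr 1
            · congr 1
              field_simp <;> ring
            · rw [mul_one_div, div_self (ne_of_gt hq'pos), ENNReal.rpow_one]
end

section
/- Let X_1,…,X_n be independent random variables uniformly distributed on [0,1] (n ≥ 2) and let L_n denote the maximal spacing, i.e., the length of the largest of the n+1 intervals into which the points X_1,…,X_n partition [0,1]. Then there exist absolute constants c, C > 0 such that c · log(n)/n ≤ E[L_n] ≤ C · log(n)/n. -/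
set_option maxHeartbeats 1000000
open scoped ENNReal


open MeasureTheory Set
open scoped ENNReal

/-- The sorted list `0 ≤ X_{(1)} ≤ … ≤ X_{(n)} ≤ 1` of the points together with the
endpoints `0` and `1` of the unit interval. -/
noncomputable def sortedWithEndpoints (n : ℕ) (X : Fin n → ℝ) : List ℝ :=
  (0:ℝ) :: (Multiset.sort (Multiset.ofList (List.ofFn X)) (· ≤ ·) ++ [1])

/-- The `i`-th spacing (`0 ≤ i ≤ n`) induced by the points `X_1, …, X_n` in `[0,1]`. -/
noncomputable def spacing (n : ℕ) (X : Fin n → ℝ) (i : ℕ) : ℝ :=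
  (sortedWithEndpoints n X).getD (i+1) 0 - (sortedWithEndpoints n X).getD i 0

/-- The maximal spacing induced by the points `X_1, …, X_n` in `[0,1]`, i.e. the length
of the largest of the `n+1` intervals into which the points partition `[0,1]`. -/
noncomputable def maxSpacing (n : ℕ) (X : Fin n → ℝ) : ℝ :=
  (Finset.range (n+1)).sup'
    (Finset.nonempty_range_iff.mpr (Nat.succ_ne_zero n)) (spacing n X)

/-- the middle sorted list -/
noncomputable def mid (n : ℕ) (X : Fin n → ℝ) : List ℝ :=
  Multiset.sort (Multiset.ofList (List.ofFn X)) (· ≤ ·)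

lemma mid_length (n : ℕ) (X : Fin n → ℝ) : (mid n X).length = n := by
  simp [mid, Multiset.length_sort]

lemma mid_sorted (n : ℕ) (X : Fin n → ℝ) : (mid n X).Pairwise (· ≤ ·) :=
  Multiset.pairwise_sort _ _

lemma mem_mid_iff {n : ℕ} {X : Fin n → ℝ} {y : ℝ} : y ∈ mid n X ↔ ∃ j, X j = y := by
  simp [mid, Multiset.mem_sort, List.mem_ofFn]

lemma mid_perm (n : ℕ) (X : Fin n → ℝ) : (mid n X).Perm (List.ofFn X) := by
  rw [← Multiset.coe_eq_coe]
  exact Multiset.sort_eq _ _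

lemma swe_length (n : ℕ) (X : Fin n → ℝ) : (sortedWithEndpoints n X).length = n + 2 := by
  simp [sortedWithEndpoints, Multiset.length_sort]

lemma swe_eq (n : ℕ) (X : Fin n → ℝ) :
    sortedWithEndpoints n X = (0:ℝ) :: (mid n X ++ [1]) := rfl

lemma swe_getD_zero (n : ℕ) (X : Fin n → ℝ) : (sortedWithEndpoints n X).getD 0 0 = 0 := rfl

lemma swe_getD_last (n : ℕ) (X : Fin n → ℝ) : (sortedWithEndpoints n X).getD (n+1) 0 = 1 := by
  rw [swe_eq, List.getD_cons_succ]
  rw [List.getD_eq_getElem _ _ (by simp [mid_length])]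
  rw [List.getElem_append_right (by simp [mid_length])]
  simp [mid_length]

lemma swe_getD_mid {n : ℕ} (X : Fin n → ℝ) {k : ℕ} (hk : k < n) :
    (sortedWithEndpoints n X).getD (k+1) 0 = (mid n X).getD k 0 := by
  rw [swe_eq, List.getD_cons_succ]
  rw [List.getD_eq_getElem _ _ (by simp [mid_length]; omega),
      List.getD_eq_getElem _ _ (by simp [mid_length]; omega)]
  exact List.getElem_append_left (by simp [mid_length]; omega)

section sortedfacts
variable {n : ℕ} {X : Fin n → ℝ} (hX : ∀ j, X j ∈ Set.Icc (0:ℝ) 1)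
include hX

lemma swe_sorted : (sortedWithEndpoints n X).Pairwise (· ≤ ·) := by
  rw [swe_eq, List.pairwise_cons]
  constructor
  · intro b hb
    rcases List.mem_append.1 hb with h | h
    · obtain ⟨j, rfl⟩ := mem_mid_iff.1 h
      exact (hX j).1
    · simp at h; simp [h]
  · rw [List.pairwise_append]
    refine ⟨mid_sorted n X, by simp, ?_⟩
    intro a ha b hb
    simp at hb
    obtain ⟨j, rfl⟩ := mem_mid_iff.1 ha
    simp [hb, (hX j).2]

-- monotone entries
lemma swe_getD_mono {i j : ℕ} (hij : i ≤ j) (hj : j < n + 2) :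
    (sortedWithEndpoints n X).getD i 0 ≤ (sortedWithEndpoints n X).getD j 0 := by
  rcases eq_or_lt_of_le hij with rfl | hij
  · exact le_refl _
  · have hl := swe_length n X
    rw [List.getD_eq_getElem _ _ (by omega), List.getD_eq_getElem _ _ (by omega)]
    exact List.pairwise_iff_getElem.1 (swe_sorted hX) i j (by omega) (by omega) hij

-- each entry is in [0,1]
lemma swe_getD_mem {i : ℕ} (hi : i < n + 2) :
    (sortedWithEndpoints n X).getD i 0 ∈ Set.Icc (0:ℝ) 1 := by
  constructor
  · have := swe_getD_mono hX (Nat.zero_le i) hi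
    rwa [swe_getD_zero] at this
  · have := swe_getD_mono hX (by omega : i ≤ n+1) (by omega)
    rwa [swe_getD_last] at this

-- each middle entry is an X j
omit hX in
lemma swe_getD_eq_X {i : ℕ} (h1 : 1 ≤ i) (h2 : i ≤ n) :
    ∃ j, (sortedWithEndpoints n X).getD i 0 = X j := by
  obtain ⟨k, rfl⟩ : ∃ k, i = k + 1 := ⟨i - 1, by omega⟩
  rw [swe_getD_mid X (by omega)]
  have hk' : k < (mid n X).length := by rw [mid_length]; omega
  rw [List.getD_eq_getElem _ _ hk']
  obtain ⟨j, hj⟩ := mem_mid_iff.1 (List.getElem_mem hk')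
  exact ⟨j, hj.symm⟩

-- each X j is a middle entry
omit hX in
lemma X_eq_swe_getD (j : Fin n) :
    ∃ i, 1 ≤ i ∧ i ≤ n ∧ (sortedWithEndpoints n X).getD i 0 = X j := by
  have hmem : X j ∈ mid n X := mem_mid_iff.2 ⟨j, rfl⟩
  obtain ⟨k, hk, hkeq⟩ := List.mem_iff_getElem.1 hmem
  rw [mid_length] at hk
  refine ⟨k + 1, by omega, by omega, ?_⟩
  rw [swe_getD_mid X hk, List.getD_eq_getElem _ _ (by rw [mid_length]; omega)]
  exact hkeq

end sortedfacts

section comb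
variable {n : ℕ} {X : Fin n → ℝ} (hX : ∀ j, X j ∈ Set.Icc (0:ℝ) 1)
include hX

lemma maxSpacing_nonneg : 0 ≤ maxSpacing n X := by
  have h0 : (0:ℕ) ∈ Finset.range (n+1) := by simp
  refine le_trans ?_ (Finset.le_sup' (spacing n X) h0)
  have := swe_getD_mono hX (by omega : (0:ℕ) ≤ 1) (by omega)
  simp only [spacing]
  linarith

lemma maxSpacing_le_one : maxSpacing n X ≤ 1 := by
  apply Finset.sup'_le
  intro i hi
  simp only [Finset.mem_range] at hi
  have h1 := swe_getD_mem hX (show i < n + 2 by omega)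
  have h2 := swe_getD_mem hX (show i + 1 < n + 2 by omega)
  simp only [spacing]
  simp only [Set.mem_Icc] at h1 h2
  linarith

/-- If the interval `[a, a+t] ⊆ [0,1]` contains none of the points, then
the maximal spacing is at least `t`. -/
lemma maxSpacing_ge_of_gap {a t : ℝ} (ht : 0 < t) (ha : 0 ≤ a) (hat : a + t ≤ 1)
    (hgap : ∀ j, X j ∉ Set.Icc a (a + t)) : t ≤ maxSpacing n X := by
  classical
  set l := sortedWithEndpoints n X with hl
  -- greatest index i ≤ n with entry ≤ a
  set P : ℕ → Prop := fun i => l.getD i 0 ≤ a with hP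
  have hP0 : P 0 := by
    show l.getD 0 0 ≤ a
    rw [hl, swe_getD_zero]; exact ha
  set i := Nat.findGreatest P n with hi
  have hin : i ≤ n := Nat.findGreatest_le n
  have hPi : P i := Nat.findGreatest_spec (Nat.zero_le n) hP0
  have hnext : a + t ≤ l.getD (i+1) 0 := by
    rcases eq_or_lt_of_le hin with heq | hlt
    · -- i = n, next entry is 1
      rw [hl, heq, swe_getD_last]
      exact hat
    · -- i < n: next entry is not ≤ a by maximality, and it is an X j or...
      have hnotP : ¬ P (i+1) := Nat.findGreatest_is_greatest (Nat.lt_succ_self i) (by omega)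
      have hgt : a < l.getD (i+1) 0 := not_le.1 hnotP
      obtain ⟨j, hj⟩ := swe_getD_eq_X (X := X) (by omega : 1 ≤ i+1) (by omega : i+1 ≤ n)
      rw [hj]
      by_contra hlt2
      push_neg at hlt2
      exact (hgap j) (Set.mem_Icc.mpr ⟨(hj ▸ hgt).le, hlt2.le⟩)
  have : t ≤ spacing n X i := by
    simp only [spacing, ← hl]
    have : l.getD i 0 ≤ a := hPi
    linarith
  exact le_trans this (Finset.le_sup' (spacing n X) (by simp; omega))

/-- If every box `[k·s, (k+1)·s]`, `k < m'` with `m'·s ≥ ...` in fact each box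
fully inside `[0,1]` contains a point, then the max spacing is at most `3s`. -/
lemma maxSpacing_le_of_hits {s : ℝ} (hs : 0 < s)
    (hhit : ∀ k : ℕ, (k + 1 : ℝ) * s ≤ 1 → ∃ j, X j ∈ Set.Icc (k * s) ((k+1) * s)) :
    maxSpacing n X ≤ 3 * s := by
  apply Finset.sup'_le
  intro i hi
  simp only [Finset.mem_range] at hi
  by_contra hcon
  push_neg at hcon
  set l := sortedWithEndpoints n X with hl
  set u := l.getD i 0 with hu
  set v := l.getD (i+1) 0 with hv
  have huv : 3 * s < v - u := hcon
  have hu0 : 0 ≤ u := (swe_getD_mem hX (show i < n+2 by omega)).1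
  have hv1 : v ≤ 1 := (swe_getD_mem hX (show i+1 < n+2 by omega)).2
  set k : ℕ := ⌊u / s⌋₊ + 1 with hk
  have hks : u < k * s := by
    have := Nat.lt_floor_add_one (u / s)
    have h2 : u / s < (k:ℝ) := by push_cast [hk]; linarith
    exact (div_lt_iff₀ hs).1 h2
  have hk1s : (k + 1 : ℝ) * s ≤ u + 2 * s := by
    have := Nat.floor_le (by positivity : 0 ≤ u / s)
    have h2 : (k:ℝ) ≤ u / s + 1 := by push_cast [hk]; linarith
    have h3 : (k + 1:ℝ) ≤ u / s + 2 := by linarith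
    have h4 : (u/s + 2) * s = u + 2 * s := by field_simp
    linarith [mul_le_mul_of_nonneg_right h3 hs.le]
  have hbox1 : (k + 1 : ℝ) * s ≤ 1 := by linarith
  obtain ⟨j, hj⟩ := hhit k hbox1
  rw [Set.mem_Icc] at hj
  have hXu : u < X j := lt_of_lt_of_le hks hj.1
  have hXv : X j < v := lt_of_le_of_lt hj.2 (by linarith)
  -- X j sits strictly between consecutive entries: contradiction
  obtain ⟨p, hp1, hpn, hpeq⟩ := X_eq_swe_getD (X := X) j
  rcases le_or_gt p i with h | h
  · have := swe_getD_mono hX h (show i < n+2 by omega)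
    rw [hpeq] at this
    exact absurd this (not_le.2 hXu)
  · have := swe_getD_mono hX (show i+1 ≤ p by omega) (show p < n+2 by omega)
    rw [hpeq] at this
    exact absurd this (not_le.2 hXv)

end comb
section meas

lemma countP_ofFn {n : ℕ} (p : ℝ → Bool) (X : Fin n → ℝ) :
    (List.ofFn X).countP p = ∑ j : Fin n, if p (X j) then 1 else 0 := by
  induction n with
  | zero => simp
  | succ m ih =>
    rw [List.ofFn_succ, List.countP_cons, Fin.sum_univ_succ, ih]
    by_cases h : p (X 0) <;> simp [h] <;> omega

lemma sorted_getD_le_iff {l : List ℝ} (hl : l.Pairwise (· ≤ ·)) :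
    ∀ k, k < l.length → ∀ x : ℝ, (l.getD k 0 ≤ x ↔ k < l.countP (fun y => decide (y ≤ x))) := by
  induction l with
  | nil => intro k hk; simp at hk
  | cons a t ih =>
    rw [List.pairwise_cons] at hl
    intro k hk x
    match k with
    | 0 =>
      rw [List.getD_cons_zero, List.countP_cons]
      constructor
      · intro hax
        have : decide (a ≤ x) = true := by simpa using hax
        simp [this]
      · intro hpos
        by_contra hax
        push_neg at hax
        have h1 : (decide (a ≤ x) : Bool) = false := by simpa using hax.not_ge
        rw [h1] at hpos
        simp at hpos
        obtain ⟨b, hb, hbx⟩ := hpos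
        exact absurd (le_trans (hl.1 b hb) hbx) hax.not_ge
    | Nat.succ m =>
      rw [List.getD_cons_succ, List.countP_cons]
      have hm : m < t.length := by simpa using hk
      rw [ih hl.2 m hm x]
      constructor
      · intro hlt
        have hgd : t.getD m 0 ≤ x := (ih hl.2 m hm x).2 hlt
        have hmem : t.getD m 0 ∈ t := by
          rw [List.getD_eq_getElem _ _ hm]; exact List.getElem_mem hm
        have hax : a ≤ x := le_trans (hl.1 _ hmem) hgd
        have : (decide (a ≤ x) : Bool) = true := by simpa using hax
        rw [this]
        simp only [if_true]
        omega
      · intro h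
        by_cases hc : decide (a ≤ x) = true <;> simp [hc] at h <;> omega

end meas

lemma measurable_mid_getD {n : ℕ} {k : ℕ} (hk : k < n) :
    Measurable fun X : Fin n → ℝ => (mid n X).getD k 0 := by
  apply measurable_of_Iic
  intro x
  have hset : (fun X : Fin n → ℝ => (mid n X).getD k 0) ⁻¹' Set.Iic x
      = (fun X : Fin n → ℝ => ∑ j, if X j ≤ x then (1:ℕ) else 0) ⁻¹' Set.Ioi k := by
    ext X
    simp only [Set.mem_preimage, Set.mem_Iic, Set.mem_Ioi]
    rw [sorted_getD_le_iff (mid_sorted n X) k (by rw [mid_length]; exact hk) x]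
    rw [(mid_perm n X).countP_eq, countP_ofFn]
    simp only [decide_eq_true_eq]
  rw [hset]
  have hg : Measurable fun X : Fin n → ℝ => ∑ j, if X j ≤ x then (1:ℕ) else 0 := by
    apply Finset.measurable_sum
    intro j _
    have hms : MeasurableSet {X : Fin n → ℝ | X j ≤ x} :=
      measurableSet_le (measurable_pi_apply j) measurable_const
    exact Measurable.ite hms measurable_const measurable_const
  exact hg measurableSet_Ioi

lemma measurable_swe_getD {n : ℕ} (k : ℕ) :
    Measurable fun X : Fin n → ℝ => (sortedWithEndpoints n X).getD k 0 := by
  match k with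
  | 0 => exact measurable_const
  | (m+1) =>
    by_cases hm : m < n
    · have : ∀ X : Fin n → ℝ, (sortedWithEndpoints n X).getD (m+1) 0 = (mid n X).getD m 0 :=
        fun X => swe_getD_mid X hm
      simp_rw [this]
      exact measurable_mid_getD hm
    · by_cases hm2 : m = n
      · subst hm2
        simp_rw [swe_getD_last]
        exact measurable_const
      · have hbig : ∀ X : Fin n → ℝ, (sortedWithEndpoints n X).getD (m+1) 0 = 0 := by
          intro X
          apply List.getD_eq_default
          rw [swe_length]; omega
        simp_rw [hbig]
        exact measurable_const

lemma measurable_maxSpacing {n : ℕ} : Measurable (maxSpacing n) := by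
  have h : maxSpacing n = fun X => (Finset.range (n+1)).sup'
      (Finset.nonempty_range_iff.mpr (Nat.succ_ne_zero n)) (fun i => spacing n X i) := rfl
  rw [h]
  exact Finset.measurable_range_sup'' (f := fun i X => spacing n X i) fun i _ =>
    ((measurable_swe_getD (i+1)).sub (measurable_swe_getD i))

instance : IsProbabilityMeasure mu01 := by
  constructor
  rw [mu01, Measure.restrict_apply_univ, Real.volume_Icc]
  norm_num

lemma mu01_apply (t : Set ℝ) : mu01 t = volume (t ∩ Set.Icc (0:ℝ) 1) :=
  Measure.restrict_apply' measurableSet_Icc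

lemma mu01_compl {s : Set ℝ} (hs : MeasurableSet s) (hsub : s ⊆ Set.Icc (0:ℝ) 1) :
    mu01 sᶜ = 1 - volume s := by
  rw [mu01_apply]
  have : sᶜ ∩ Set.Icc (0:ℝ) 1 = Set.Icc (0:ℝ) 1 \ s := by
    ext y; simp [Set.mem_diff]; tauto
  rw [this, measure_diff hsub hs.nullMeasurableSet
    (ne_of_lt (lt_of_le_of_lt (measure_mono hsub) measure_Icc_lt_top))]
  rw [Real.volume_Icc]
  norm_num

lemma avoid_set_eq (n : ℕ) (s : Set ℝ) :
    {ω : Fin n → ℝ | ∀ j, ω j ∉ s} = Set.pi Set.univ (fun _ : Fin n => sᶜ) := by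
  ext ω; simp [Set.mem_pi]

lemma avoid_prob (n : ℕ) (s : Set ℝ) :
    (Measure.pi fun _ : Fin n => mu01) {ω | ∀ j, ω j ∉ s} = (mu01 sᶜ)^n := by
  rw [avoid_set_eq, Measure.pi_pi]
  simp [Finset.prod_const]

lemma avoid_measurable (n : ℕ) {s : Set ℝ} (hs : MeasurableSet s) :
    MeasurableSet {ω : Fin n → ℝ | ∀ j, ω j ∉ s} := by
  rw [avoid_set_eq]
  exact MeasurableSet.univ_pi fun _ => hs.compl

lemma ae_coords_mem (n : ℕ) :
    ∀ᵐ ω ∂(Measure.pi fun _ : Fin n => mu01), ∀ j, ω j ∈ Set.Icc (0:ℝ) 1 := by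
  rw [MeasureTheory.ae_all_iff]
  intro j
  rw [MeasureTheory.ae_iff]
  have hset : {ω : Fin n → ℝ | ¬ ω j ∈ Set.Icc (0:ℝ) 1}
      = Set.pi Set.univ (Function.update (fun _ : Fin n => (Set.univ : Set ℝ)) j (Set.Icc (0:ℝ) 1)ᶜ) := by
    classical
    ext ω
    simp only [Set.mem_setOf_eq, Set.mem_pi, Set.mem_univ, forall_true_left]
    constructor
    · intro h i
      by_cases hij : i = j
      · subst hij
        simp only [Function.update_self, Set.mem_compl_iff]
        exact h
      · simp [Function.update_of_ne hij]
    · intro h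
      have := h j
      simpa only [Function.update_self, Set.mem_compl_iff] using this
  rw [hset, Measure.pi_pi]
  classical
  rw [Finset.prod_eq_zero (Finset.mem_univ j)]
  rw [Function.update_self, mu01_apply]
  simp

lemma bonferroni {α : Type*} [MeasurableSpace α] (μ : Measure α) (A : ℕ → Set α)
    (hA : ∀ k, MeasurableSet (A k)) (m : ℕ) :
    ∑ k ∈ Finset.range m, μ (A k) ≤ μ (⋃ k ∈ Finset.range m, A k)
      + ∑ k ∈ Finset.range m, ∑ l ∈ Finset.range k, μ (A k ∩ A l) := by
  induction m with
  | zero => simp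
  | succ m ih =>
    rw [Finset.sum_range_succ, Finset.sum_range_succ (f := fun k => ∑ l ∈ Finset.range k, μ (A k ∩ A l))]
    set B := ⋃ k ∈ Finset.range m, A k with hB
    have hBm : MeasurableSet B := Finset.measurableSet_biUnion _ fun k _ => hA k
    have hU : (⋃ k ∈ Finset.range (m+1), A k) = B ∪ A m := by
      ext x
      simp only [hB, Set.mem_iUnion, Finset.mem_range, Set.mem_union]
      constructor
      · rintro ⟨k, hk, hx⟩
        rcases Nat.lt_succ_iff_lt_or_eq.1 hk with h | rfl
        · exact Or.inl ⟨k, h, hx⟩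
        · exact Or.inr hx
      · rintro (⟨k, hk, hx⟩ | hx)
        · exact ⟨k, by omega, hx⟩
        · exact ⟨m, by omega, hx⟩
    have h1 : μ (B ∪ A m) + μ (B ∩ A m) = μ B + μ (A m) :=
      measure_union_add_inter B (hA m)
    have h2 : μ (B ∩ A m) ≤ ∑ l ∈ Finset.range m, μ (A m ∩ A l) := by
      have hsub : B ∩ A m ⊆ ⋃ l ∈ Finset.range m, (A m ∩ A l) := by
        rintro x ⟨hxB, hxA⟩
        simp only [hB, Set.mem_iUnion, Finset.mem_range] at hxB ⊢
        obtain ⟨l, hl, hx⟩ := hxB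
        exact ⟨l, hl, hxA, hx⟩
      exact le_trans (measure_mono hsub) (measure_biUnion_finset_le _ _)
    calc ∑ k ∈ Finset.range m, μ (A k) + μ (A m)
        ≤ (μ B + ∑ k ∈ Finset.range m, ∑ l ∈ Finset.range k, μ (A k ∩ A l)) + μ (A m) := by
          exact add_le_add_left ih _
      _ = (μ B + μ (A m)) + ∑ k ∈ Finset.range m, ∑ l ∈ Finset.range k, μ (A k ∩ A l) := by ring
      _ = (μ (B ∪ A m) + μ (B ∩ A m)) + ∑ k ∈ Finset.range m, ∑ l ∈ Finset.range k, μ (A k ∩ A l) := by rw [h1]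
      _ ≤ (μ (B ∪ A m) + ∑ l ∈ Finset.range m, μ (A m ∩ A l)) + ∑ k ∈ Finset.range m, ∑ l ∈ Finset.range k, μ (A k ∩ A l) := by
          exact add_le_add_left (add_le_add_right h2 _) _
      _ = μ (⋃ k ∈ Finset.range (m+1), A k) + (∑ k ∈ Finset.range m, ∑ l ∈ Finset.range k, μ (A k ∩ A l) + ∑ l ∈ Finset.range m, μ (A m ∩ A l)) := by
          rw [hU]; ring

section main
open Real

lemma integrable_maxSpacing (n : ℕ) (hn : 1 ≤ n) :
    Integrable (maxSpacing n) (Measure.pi fun _ : Fin n => mu01) := by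
  obtain ⟨m, rfl⟩ : ∃ m, n = m + 1 := ⟨n - 1, by omega⟩
  apply Integrable.mono' (integrable_const 1)
    (measurable_maxSpacing).aestronglyMeasurable
  filter_upwards [ae_coords_mem (m+1)] with ω hω
  rw [Real.norm_eq_abs, abs_le]
  exact ⟨by linarith [maxSpacing_nonneg hω], maxSpacing_le_one hω⟩

-- exp bounds
lemma exp_neg_le_inv_add (c : ℝ) (hc : 0 ≤ c) : Real.exp (-c) ≤ 1 / (1 + c) := by
  rw [Real.exp_neg, one_div]
  exact inv_anti₀ (by linarith) (by linarith [Real.add_one_le_exp c])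

lemma one_sub_le_exp_neg (c : ℝ) : 1 - c ≤ Real.exp (-c) := by
  have := Real.add_one_le_exp (-c)
  linarith

lemma exp_neg_two_le_one_sub {c : ℝ} (h0 : 0 ≤ c) (h2 : c ≤ 1/2) :
    Real.exp (-(2*c)) ≤ 1 - c := by
  have h1 : Real.exp (-(2*c)) ≤ 1 / (1 + 2*c) := by
    have := Real.add_one_le_exp (2*c)
    rw [Real.exp_neg]
    rw [one_div]
    apply inv_anti₀ (by linarith) (by linarith)
  refine h1.trans ?_
  rw [div_le_iff₀ (by linarith)]
  nlinarith

end main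

noncomputable abbrev Pn (n : ℕ) : Measure (Fin n → ℝ) := Measure.pi fun _ : Fin n => mu01

instance (n : ℕ) : IsProbabilityMeasure (Pn n) := by
  unfold Pn; infer_instance

lemma avoid_Icc_prob (n : ℕ) {a b : ℝ} (h0 : 0 ≤ a) (hab : a ≤ b) (hb : b ≤ 1) :
    Pn n {ω | ∀ j, ω j ∉ Set.Icc a b} = ENNReal.ofReal ((1 - (b - a))^n) := by
  rw [avoid_prob, mu01_compl measurableSet_Icc (Set.Icc_subset_Icc h0 hb), Real.volume_Icc]
  rw [← ENNReal.ofReal_one, ← ENNReal.ofReal_sub _ (by linarith), ← ENNReal.ofReal_pow (by linarith)]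

lemma avoid_two_Icc_prob (n : ℕ) {t : ℝ} (ht : 0 < t) {k l : ℕ} (hlk : l < k)
    (hk1 : ((k:ℝ)+1) * t ≤ 1) :
    Pn n {ω | ∀ j, ω j ∉ (Set.Icc ((k:ℝ)*t) (((k:ℝ)+1)*t) ∪ Set.Icc ((l:ℝ)*t) (((l:ℝ)+1)*t))}
      = ENNReal.ofReal ((1 - 2*t)^n) := by
  have hl1k : ((l:ℝ)+1) ≤ (k:ℝ) := by exact_mod_cast hlk
  have hl0 : (0:ℝ) ≤ (l:ℝ) * t := by positivity
  have hk0 : (0:ℝ) ≤ (k:ℝ) * t := by positivity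
  have hlt_le : ((l:ℝ)+1) * t ≤ (k:ℝ) * t := mul_le_mul_of_nonneg_right hl1k ht.le
  have h2t : 2 * t ≤ 1 := by nlinarith [mul_le_mul_of_nonneg_right hl1k ht.le]
  have hsub : (Set.Icc ((k:ℝ)*t) (((k:ℝ)+1)*t) ∪ Set.Icc ((l:ℝ)*t) (((l:ℝ)+1)*t))
      ⊆ Set.Icc (0:ℝ) 1 := by
    apply Set.union_subset
    · exact Set.Icc_subset_Icc hk0 hk1
    · exact Set.Icc_subset_Icc hl0 (by linarith)
  rw [avoid_prob, mu01_compl (measurableSet_Icc.union measurableSet_Icc) hsub]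
  have hint : volume (Set.Icc ((k:ℝ)*t) (((k:ℝ)+1)*t) ∩ Set.Icc ((l:ℝ)*t) (((l:ℝ)+1)*t)) = 0 := by
    rw [Set.Icc_inter_Icc, Real.volume_Icc]
    apply ENNReal.ofReal_eq_zero.2
    have h1 : min (((k:ℝ)+1)*t) (((l:ℝ)+1)*t) ≤ ((l:ℝ)+1)*t := min_le_right _ _
    have h2 : (k:ℝ)*t ≤ max ((k:ℝ)*t) ((l:ℝ)*t) := le_max_left _ _
    linarith
  have hu : volume (Set.Icc ((k:ℝ)*t) (((k:ℝ)+1)*t) ∪ Set.Icc ((l:ℝ)*t) (((l:ℝ)+1)*t))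
      = ENNReal.ofReal (2*t) := by
    have h := measure_union_add_inter (μ := volume)
      (Set.Icc ((k:ℝ)*t) (((k:ℝ)+1)*t)) (measurableSet_Icc
        (a := (l:ℝ)*t) (b := ((l:ℝ)+1)*t))
    rw [hint, add_zero] at h
    rw [h, Real.volume_Icc, Real.volume_Icc]
    rw [← ENNReal.ofReal_add (by linarith) (by linarith)]
    congr 1
    ring
  rw [hu]
  rw [← ENNReal.ofReal_one, ← ENNReal.ofReal_sub _ (by linarith), ← ENNReal.ofReal_pow (by linarith)]

lemma lower_bound (n : ℕ) (hn : 2 ≤ n) :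
    Real.log n / n / 56 ≤ ∫ ω, maxSpacing n ω ∂(Pn n) := by
  have hn1 : (1:ℝ) < n := by exact_mod_cast hn
  have hn0 : (0:ℝ) < n := by linarith
  have hlog : 0 < Real.log n := Real.log_pos hn1
  have hlog2 : Real.log 2 ≤ Real.log n := Real.log_le_log (by norm_num) (by exact_mod_cast hn)
  have hl2 : (0.6931471803 : ℝ) < Real.log 2 := Real.log_two_gt_d9
  set t : ℝ := Real.log n / (4 * n) with hT
  have ht0 : 0 < t := by positivity
  have hlogn_le : Real.log n ≤ n := by
    have := Real.log_le_sub_one_of_pos hn0; linarith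
  have ht4 : t ≤ 1/4 := by
    rw [hT, div_le_div_iff₀ (by positivity) (by norm_num)]
    linarith
  set p : ℝ := (1 - t)^n with hp
  set q : ℝ := (1 - 2*t)^n with hq
  have h1t : 0 < 1 - t := by linarith
  have h12t : 0 ≤ 1 - 2*t := by linarith
  have hp0 : 0 < p := pow_pos h1t n
  have hq0 : 0 ≤ q := pow_nonneg h12t n
  have hp_le : p ≤ 6/7 := by
    have h1 : (1 - t) ≤ Real.exp (-t) := one_sub_le_exp_neg t
    have h2 : p ≤ Real.exp (-t)^n := pow_le_pow_left₀ h1t.le h1 n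
    rw [← Real.exp_nat_mul] at h2
    have h3 : (n:ℝ) * (-t) = -(Real.log n / 4) := by rw [hT]; field_simp
    rw [h3] at h2
    have h4 : Real.exp (-(Real.log n / 4)) ≤ Real.exp (-(Real.log 2 / 4)) :=
      Real.exp_le_exp.2 (by linarith)
    have h5 : Real.exp (-(Real.log 2 / 4)) ≤ 1 / (1 + Real.log 2 / 4) :=
      exp_neg_le_inv_add _ (by linarith)
    have h6 : 1 / (1 + Real.log 2 / 4) ≤ 6/7 := by
      rw [div_le_div_iff₀ (by linarith) (by norm_num)]
      linarith
    linarith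
  have hp_le1 : p ≤ 1 := le_trans hp_le (by norm_num)
  have hp_ge : Real.exp (-(Real.log n / 2)) ≤ p := by
    have h1 : Real.exp (-(2*t)) ≤ 1 - t := exp_neg_two_le_one_sub ht0.le (by linarith)
    have h2 : Real.exp (-(2*t))^n ≤ p := pow_le_pow_left₀ (Real.exp_pos _).le h1 n
    rw [← Real.exp_nat_mul] at h2
    have h3 : (n:ℝ) * (-(2*t)) = -(Real.log n / 2) := by rw [hT]; field_simp; ring
    rwa [h3] at h2
  have ht_le_p : t ≤ p := by
    refine le_trans ?_ hp_ge
    rw [hT, div_le_iff₀ (by positivity)]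
    have hy : Real.log n / 2 ≤ Real.exp (Real.log n / 2) := by
      linarith [Real.add_one_le_exp (Real.log n / 2)]
    have hpos := Real.exp_pos (Real.log n / 2)
    have hnn : (n:ℝ) = Real.exp (Real.log n / 2) * Real.exp (Real.log n / 2) := by
      rw [← Real.exp_add, add_halves]
      exact (Real.exp_log hn0).symm
    have hneg : Real.exp (-(Real.log n / 2)) = (Real.exp (Real.log n / 2))⁻¹ :=
      Real.exp_neg _
    rw [hneg]
    set E := Real.exp (Real.log n / 2) with hE
    calc Real.log n ≤ 4 * E := by linarith
    _ = E⁻¹ * (4 * (E*E)) := by field_simp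
    _ = E⁻¹ * (4 * (n:ℝ)) := by rw [← hnn]
  set m : ℕ := ⌊1/p⌋₊ with hm
  have hm1 : 1 ≤ m := Nat.le_floor (by
    rw [Nat.cast_one, le_div_iff₀ hp0]; linarith)
  have hmR : (1:ℝ) ≤ m := by exact_mod_cast hm1
  have hmp_le : (m:ℝ) * p ≤ 1 := by
    have h := Nat.floor_le (by positivity : (0:ℝ) ≤ 1/p)
    calc (m:ℝ)*p ≤ (1/p)*p := mul_le_mul_of_nonneg_right h hp0.le
    _ = 1 := by field_simp
  have hmp_ge : 1 - p ≤ (m:ℝ) * p := by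
    have h := (Nat.lt_floor_add_one (1/p)).le
    rw [← hm, div_le_iff₀ hp0] at h
    have hexp : ((m:ℝ)+1)*p = (m:ℝ)*p + p := by ring
    linarith
  have hmp7 : 1/7 ≤ (m:ℝ) * p := by linarith
  have hmt_le : (m:ℝ) * t ≤ 1 :=
    le_trans (mul_le_mul_of_nonneg_left ht_le_p (Nat.cast_nonneg m)) hmp_le
  set A : ℕ → Set (Fin n → ℝ) :=
    fun k => {ω | ∀ j, ω j ∉ Set.Icc ((k:ℝ)*t) (((k:ℝ)+1)*t)} with hA
  have hAm : ∀ k, MeasurableSet (A k) := fun k => avoid_measurable n measurableSet_Icc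
  have hbox : ∀ k, k < m → ((k:ℝ)+1)*t ≤ 1 := by
    intro k hk
    have hk1 : (k:ℝ)+1 ≤ (m:ℝ) := by exact_mod_cast hk
    calc ((k:ℝ)+1)*t ≤ (m:ℝ)*t := mul_le_mul_of_nonneg_right hk1 ht0.le
    _ ≤ 1 := hmt_le
  have hPA : ∀ k, k < m → Pn n (A k) = ENNReal.ofReal p := by
    intro k hk
    rw [hA]
    rw [avoid_Icc_prob n (by positivity) (by nlinarith) (hbox k hk)]
    congr 2
    ring
  have hPAA : ∀ k l, l < k → k < m → Pn n (A k ∩ A l) = ENNReal.ofReal q := by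
    intro k l hlk hk
    have hAA : A k ∩ A l = {ω : Fin n → ℝ | ∀ j, ω j ∉
        (Set.Icc ((k:ℝ)*t) (((k:ℝ)+1)*t) ∪ Set.Icc ((l:ℝ)*t) (((l:ℝ)+1)*t))} := by
      ext ω
      simp only [hA, Set.mem_inter_iff, Set.mem_setOf_eq, Set.mem_union, not_or]
      constructor
      · rintro ⟨h1, h2⟩ j; exact ⟨h1 j, h2 j⟩
      · intro h; exact ⟨fun j => (h j).1, fun j => (h j).2⟩
    rw [hAA, avoid_two_Icc_prob n ht0 hlk (hbox k hk)]
  set G := ⋃ k ∈ Finset.range m, A k with hG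
  have hGm : MeasurableSet G := Finset.measurableSet_biUnion _ fun k _ => hAm k
  have hGfin : Pn n G ≠ ⊤ := measure_ne_top _ _
  -- Bonferroni
  have hbon := bonferroni (Pn n) A hAm m
  have hsum1 : ∑ k ∈ Finset.range m, Pn n (A k) = ENNReal.ofReal ((m:ℝ) * p) := by
    rw [Finset.sum_congr rfl (fun k hk => hPA k (Finset.mem_range.1 hk)),
      Finset.sum_const, Finset.card_range, nsmul_eq_mul,
      ← ENNReal.ofReal_natCast m, ← ENNReal.ofReal_mul (Nat.cast_nonneg m)]
  set S : ℝ := ∑ k ∈ Finset.range m, (k:ℝ) * q with hS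
  have hS0 : 0 ≤ S := Finset.sum_nonneg fun k _ => by positivity
  have hsum2 : ∑ k ∈ Finset.range m, ∑ l ∈ Finset.range k, Pn n (A k ∩ A l)
      = ENNReal.ofReal S := by
    rw [hS, ENNReal.ofReal_sum_of_nonneg (fun k _ => by positivity)]
    refine Finset.sum_congr rfl fun k hk => ?_
    rw [Finset.sum_congr rfl (fun l hl => hPAA k l (Finset.mem_range.1 hl)
        (Finset.mem_range.1 hk)),
      Finset.sum_const, Finset.card_range, nsmul_eq_mul,
      ← ENNReal.ofReal_natCast k, ← ENNReal.ofReal_mul (Nat.cast_nonneg k)]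
  rw [hsum1, hsum2, ← hG] at hbon
  have hPG : (m:ℝ) * p - S ≤ (Pn n G).toReal := by
    rw [← ENNReal.ofReal_le_iff_le_toReal hGfin]
    rw [ENNReal.ofReal_sub _ hS0]
    exact tsub_le_iff_right.2 hbon
  -- bound S
  have hq_le : q ≤ p^2 := by
    have h1 : (1 - 2*t) ≤ (1-t)^2 := by nlinarith
    have h2 : q ≤ ((1-t)^2)^n := pow_le_pow_left₀ h12t h1 n
    calc q ≤ ((1-t)^2)^n := h2
    _ = ((1-t)^n)^2 := by rw [← pow_mul, ← pow_mul, mul_comm]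
    _ = p^2 := by rw [hp]
  have hcast : (∑ i ∈ Finset.range m, (i:ℝ)) * 2 = (m:ℝ) * ((m:ℝ) - 1) := by
    have hgauss := congrArg (Nat.cast (R := ℝ)) (Finset.sum_range_id_mul_two m)
    push_cast [Nat.cast_sub hm1] at hgauss
    linarith
  have hSsum : S * 2 = ((m:ℝ) * ((m:ℝ) - 1)) * q := by
    rw [hS, ← Finset.sum_mul]
    linear_combination q * hcast
  have hS_le : S ≤ (m:ℝ) * p / 2 := by
    have h1 : S * 2 ≤ ((m:ℝ) * p)^2 := by
      rw [hSsum]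
      have hmm : ((m:ℝ) * ((m:ℝ)-1)) ≤ (m:ℝ)^2 := by nlinarith [Nat.cast_nonneg (α := ℝ) m]
      calc ((m:ℝ) * ((m:ℝ) - 1)) * q ≤ (m:ℝ)^2 * q :=
        mul_le_mul_of_nonneg_right hmm hq0
      _ ≤ (m:ℝ)^2 * p^2 := mul_le_mul_of_nonneg_left hq_le (by positivity)
      _ = ((m:ℝ)*p)^2 := by ring
    nlinarith [hmp_le, hmp7]
  have hPG14 : 1/14 ≤ (Pn n G).toReal := by
    have : (m:ℝ)*p/2 ≤ (m:ℝ)*p - S := by linarith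
    linarith
  -- integrate
  have hae : ∀ᵐ ω ∂(Pn n), G.indicator (fun _ => t) ω ≤ maxSpacing n ω := by
    filter_upwards [ae_coords_mem n] with ω hω
    by_cases hωG : ω ∈ G
    · rw [Set.indicator_of_mem hωG]
      rw [hG] at hωG
      simp only [Set.mem_iUnion, Finset.mem_range, exists_prop] at hωG
      obtain ⟨k, hk, hωA⟩ := hωG
      refine maxSpacing_ge_of_gap (a := (k:ℝ)*t) hω ht0 (by positivity) ?_ ?_
      · have := hbox k hk; linarith
      · intro j
        rw [show (k:ℝ)*t + t = ((k:ℝ)+1)*t by ring]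
        exact hωA j
    · rw [Set.indicator_of_notMem hωG]
      exact maxSpacing_nonneg hω
  have hint : ∫ ω, G.indicator (fun _ => t) ω ∂(Pn n) = (Pn n G).toReal * t := by
    rw [integral_indicator_const t hGm, smul_eq_mul]; rfl
  have hle := integral_mono_ae ((integrable_const t).indicator hGm)
    (integrable_maxSpacing n (by omega)) hae
  rw [hint] at hle
  calc Real.log n / (n:ℝ) / 56 = t * (1/14) := by rw [hT]; ring
  _ ≤ t * (Pn n G).toReal := mul_le_mul_of_nonneg_left hPG14 ht0.le
  _ = (Pn n G).toReal * t := mul_comm _ _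
  _ ≤ _ := hle

lemma upper_bound (n : ℕ) (hn : 2 ≤ n) :
    ∫ ω, maxSpacing n ω ∂(Pn n) ≤ 10 * Real.log n / n := by
  have hn1 : (1:ℝ) < n := by exact_mod_cast hn
  have hn0 : (0:ℝ) < n := by linarith
  have hlog : 0 < Real.log n := Real.log_pos hn1
  have hlog2 : Real.log 2 ≤ Real.log n := Real.log_le_log (by norm_num) (by exact_mod_cast hn)
  have hl2 : (0.6931471803 : ℝ) < Real.log 2 := Real.log_two_gt_d9
  set s : ℝ := 2 * Real.log n / n with hs
  have hs0 : 0 < s := by positivity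
  have hlog_half : Real.log n ≤ n / 2 := by
    have h1 := Real.add_one_le_exp ((n:ℝ)/4)
    have h3 : (n:ℝ) ≤ Real.exp ((n:ℝ)/2) := by
      have he : Real.exp ((n:ℝ)/2) = Real.exp ((n:ℝ)/4) * Real.exp ((n:ℝ)/4) := by
        rw [← Real.exp_add]; ring_nf
      nlinarith [Real.exp_pos ((n:ℝ)/4), sq_nonneg ((n:ℝ)/4 - 1), h1, he]
    exact (Real.log_le_iff_le_exp hn0).2 h3
  have hs1 : s ≤ 1 := by rw [hs, div_le_one hn0]; linarith
  have h1s : 0 ≤ 1 - s := by linarith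
  set m : ℕ := ⌊1/s⌋₊ with hm
  set A : ℕ → Set (Fin n → ℝ) :=
    fun k => {ω | ∀ j, ω j ∉ Set.Icc ((k:ℝ)*s) (((k:ℝ)+1)*s)} with hA
  have hAmeas : ∀ k, MeasurableSet (A k) := fun k => avoid_measurable n measurableSet_Icc
  set U := ⋃ k ∈ Finset.range m, A k with hU
  have hUm : MeasurableSet U := Finset.measurableSet_biUnion _ fun k _ => hAmeas k
  have hms : (m:ℝ) * s ≤ 1 := by
    have h := Nat.floor_le (by positivity : (0:ℝ) ≤ 1/s)
    calc (m:ℝ)*s ≤ (1/s)*s := mul_le_mul_of_nonneg_right h hs0.le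
    _ = 1 := by field_simp
  have hbox : ∀ k, k < m → ((k:ℝ)+1)*s ≤ 1 := by
    intro k hk
    have hk1 : (k:ℝ)+1 ≤ (m:ℝ) := by exact_mod_cast hk
    calc ((k:ℝ)+1)*s ≤ (m:ℝ)*s := mul_le_mul_of_nonneg_right hk1 hs0.le
    _ ≤ 1 := hms
  have hae : ∀ᵐ ω ∂(Pn n), maxSpacing n ω ≤ 3*s + U.indicator (fun _ => (1:ℝ)) ω := by
    filter_upwards [ae_coords_mem n] with ω hω
    by_cases hωU : ω ∈ U
    · rw [Set.indicator_of_mem hωU]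
      linarith [maxSpacing_le_one hω]
    · rw [Set.indicator_of_notMem hωU, add_zero]
      apply maxSpacing_le_of_hits hω hs0
      intro k hk1
      have hkm : k < m := by
        have hd : (k:ℝ)+1 ≤ 1/s := by rw [le_div_iff₀ hs0]; linarith
        have : (k+1 : ℕ) ≤ m := Nat.le_floor (by push_cast; linarith)
        omega
      have hnA : ω ∉ A k := fun hc => hωU
        (by rw [hU]; exact Set.mem_biUnion (Finset.mem_range.2 hkm) hc)
      simp only [hA, Set.mem_setOf_eq, not_forall, not_not] at hnA
      exact hnA
  have hind : Integrable (fun ω : Fin n → ℝ => U.indicator (fun _ => (1:ℝ)) ω) (Pn n) :=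
    (integrable_const (1:ℝ)).indicator hUm
  have hint : Integrable (fun ω : Fin n → ℝ => 3*s + U.indicator (fun _ => (1:ℝ)) ω) (Pn n) :=
    (integrable_const (3*s)).add hind
  have hle := integral_mono_ae (integrable_maxSpacing n (by omega)) hint hae
  rw [integral_add (integrable_const _) hind, integral_const,
    integral_indicator_const (1:ℝ) hUm] at hle
  simp only [Measure.real, measure_univ, ENNReal.toReal_one, smul_eq_mul, one_mul, mul_one] at hle
  -- bound the bad probability
  have hPU : (Pn n U).toReal ≤ (m:ℝ) * (1-s)^n := by
    have h1 : Pn n U ≤ ∑ k ∈ Finset.range m, Pn n (A k) := by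
      rw [hU]; exact measure_biUnion_finset_le _ _
    have h2 : ∀ k ∈ Finset.range m, Pn n (A k) = ENNReal.ofReal ((1-s)^n) := by
      intro k hk
      rw [hA]
      rw [avoid_Icc_prob n (by positivity) (by nlinarith) (hbox k (Finset.mem_range.1 hk))]
      congr 2
      ring
    rw [Finset.sum_congr rfl h2, Finset.sum_const, Finset.card_range, nsmul_eq_mul] at h1
    have hne : ((m:ℕ) : ℝ≥0∞) * ENNReal.ofReal ((1-s)^n) ≠ ⊤ :=
      ENNReal.mul_ne_top (ENNReal.natCast_ne_top m) ENNReal.ofReal_ne_top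
    have := ENNReal.toReal_mono hne h1
    rwa [ENNReal.toReal_mul, ENNReal.toReal_natCast _,
      ENNReal.toReal_ofReal (pow_nonneg h1s n)] at this
  have hpow : (1-s)^n ≤ 1 / (n:ℝ)^2 := by
    have h1 : (1-s) ≤ Real.exp (-s) := one_sub_le_exp_neg s
    have h2 : (1-s)^n ≤ Real.exp (-s)^n := pow_le_pow_left₀ h1s h1 n
    rw [← Real.exp_nat_mul] at h2
    have h3 : (n:ℝ) * (-s) = -(Real.log n + Real.log n) := by
      rw [hs]; field_simp; ring
    rw [h3] at h2
    have h4 : Real.exp (-(Real.log n + Real.log n)) = 1/(n:ℝ)^2 := by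
      rw [Real.exp_neg, Real.exp_add, Real.exp_log hn0, one_div, sq]
    rwa [h4] at h2
  have hmn : (m:ℝ) ≤ (n:ℝ)/(2*Real.log n) := by
    have h := Nat.floor_le (by positivity : (0:ℝ) ≤ 1/s)
    calc (m:ℝ) ≤ 1/s := h
    _ = (n:ℝ)/(2*Real.log n) := by rw [hs]; field_simp
  have hPU2 : (Pn n U).toReal ≤ 1/(2*(n:ℝ)*Real.log n) := by
    calc (Pn n U).toReal ≤ (m:ℝ)*(1-s)^n := hPU
    _ ≤ ((n:ℝ)/(2*Real.log n)) * (1/(n:ℝ)^2) := by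
        apply mul_le_mul hmn hpow (pow_nonneg h1s n) (by positivity)
    _ = 1/(2*(n:ℝ)*Real.log n) := by field_simp
  have key : 1/(2*(n:ℝ)*Real.log n) ≤ 4 * Real.log n / n := by
    rw [div_le_div_iff₀ (by positivity) (by positivity)]
    have h48 : (0.48:ℝ) ≤ Real.log n * Real.log n := by nlinarith
    nlinarith [h48, hn0]
  have e1 : 10 * Real.log n / (n:ℝ) = 3*s + 4*Real.log n/n := by rw [hs]; ring
  rw [e1]
  linarith [hle, hPU2, key]

theorem stmt7 :
    ∃ c C : ℝ, 0 < c ∧ 0 < C ∧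
      ∀ n : ℕ, 2 ≤ n →
        c * Real.log n / n
            ≤ ∫ ω : Fin n → ℝ, maxSpacing n ω ∂(Measure.pi fun _ : Fin n => mu01) ∧
          (∫ ω : Fin n → ℝ, maxSpacing n ω ∂(Measure.pi fun _ : Fin n => mu01))
            ≤ C * Real.log n / n := by
  refine ⟨1/56, 10, by norm_num, by norm_num, ?_⟩
  intro n hn
  constructor
  · have h := lower_bound n hn
    calc (1/56 : ℝ) * Real.log n / n = Real.log n / n / 56 := by ring
    _ ≤ _ := h
  · have h := upper_bound n hn
    calc ∫ ω : Fin n → ℝ, maxSpacing n ω ∂(Measure.pi fun _ : Fin n => mu01)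
        ≤ 10 * Real.log n / n := h
    _ = 10 * Real.log n / n := rfl
end

section
/- Let d ≥ 1 and 1 ≤ q < ∞. Let X_1,…,X_n be independent random points uniformly distributed in [0,1]^d and P_n = {X_1,…,X_n}. Then E[ ∫_{[0,1]^d} dist(x, P_n)^q dx ] = 2^{−q} · n! / ((q/d + 1)(q/d + 2) ⋯ (q/d + n)). -/
open MeasureTheory Set
open scoped ENNReal Interval

/-- The maximum metric on the `d`-dimensional torus:
`dist(x,y) = min_{k ∈ ℤ^d} ‖x + k − y‖_∞` for `x, y ∈ [0,1]^d`. -/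
noncomputable def tdist (d : ℕ) (x y : Fin d → ℝ) : ℝ :=
  ⨅ k : Fin d → ℤ, ‖(x + fun i => (k i : ℝ)) - y‖

/-- The unit cube `[0,1]^d`. -/
def unitCube (d : ℕ) : Set (Fin d → ℝ) := Set.Icc 0 1

/-- The class `F_d` of functions `f : [0,1]^d → ℝ` that are `1`-Lipschitz with respect
to the torus metric `tdist`. -/
def LipClass (d : ℕ) : Set ((Fin d → ℝ) → ℝ) :=
  {f | ∀ x ∈ unitCube d, ∀ y ∈ unitCube d, |f x - f y| ≤ tdist d x y}

/-- Lebesgue measure restricted to the unit cube `[0,1]^d`. -/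
noncomputable def cubeMeasure (d : ℕ) : Measure (Fin d → ℝ) :=
  volume.restrict (unitCube d)

lemma round_min (u : ℝ) (m : ℤ) : |u - round u| ≤ |u - m| := by
  rcases eq_or_ne m (round u) with rfl | h
  · exact le_refl _
  · by_contra hc
    push_neg at hc
    have h1 : |u - round u| ≤ 1/2 := abs_sub_round u
    have h2 : |u - m| < 1/2 := lt_of_lt_of_le hc h1
    have h3 : |((round u : ℤ) : ℝ) - (m : ℤ)| < 1 := by
      calc |((round u : ℤ) : ℝ) - m| ≤ |(round u : ℝ) - u| + |u - m| := abs_sub_le _ _ _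
        _ < 1 := by rw [abs_sub_comm]; linarith
    rw [← Int.cast_sub, ← Int.cast_abs] at h3
    have h4 : |round u - m| < (1:ℤ) := by exact_mod_cast h3
    rw [Int.abs_lt_one_iff, sub_eq_zero] at h4
    exact h (h4.symm)

lemma tdist_eq (d : ℕ) (x y : Fin d → ℝ) :
    tdist d x y = ‖fun i => (x i - y i) - round (x i - y i)‖ := by
  have hbdd : BddBelow (Set.range fun k : Fin d → ℤ => ‖(x + fun i => ((k i : ℤ) : ℝ)) - y‖) :=
    ⟨0, by rintro r ⟨k, rfl⟩; exact norm_nonneg _⟩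
  apply le_antisymm
  · have := ciInf_le hbdd (fun i => -round (x i - y i))
    refine le_trans this (le_of_eq ?_)
    congr 1
    funext i
    push_cast
    simp [Pi.add_apply, Pi.sub_apply]
    ring
  · refine le_ciInf fun k => ?_
    rw [pi_norm_le_iff_of_nonneg (norm_nonneg _)]
    intro i
    calc ‖x i - y i - round (x i - y i)‖ = |x i - y i - round (x i - y i)| := rfl
      _ ≤ |x i - y i - (-(k i) : ℤ)| := round_min _ _
      _ = ‖((x + fun j => ((k j : ℤ) : ℝ)) - y) i‖ := by
          simp [Real.norm_eq_abs, Pi.add_apply, Pi.sub_apply]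
          ring_nf
      _ ≤ ‖(x + fun j => ((k j : ℤ) : ℝ)) - y‖ := norm_le_pi_norm _ i

lemma oneD {a t : ℝ} (ha0 : 0 ≤ a) (ha1 : a ≤ 1) (ht0 : 0 ≤ t) (ht : t ≤ 1/2) :
    volume ({s : ℝ | |a - s - round (a - s)| ≤ t} ∩ Icc 0 1) = ENNReal.ofReal (2*t) := by
  have hnull : ∀ x y : ℝ, y ≤ x → volume (Icc x y) = 0 := fun x y h => by
    rw [Real.volume_Icc]; exact ENNReal.ofReal_eq_zero.mpr (by linarith)
  have hset : {s : ℝ | |a - s - round (a - s)| ≤ t} ∩ Icc 0 1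
      = Icc 0 (a+t-1) ∪ Icc (max 0 (a-t)) (min 1 (a+t)) ∪ Icc (a+1-t) 1 := by
    ext s
    constructor
    · rintro ⟨hs, hs0, hs1⟩
      simp only [mem_setOf_eq] at hs
      rw [abs_le] at hs
      set r := round (a - s) with hr
      have hrlb : (-1 : ℤ) ≤ r := by
        have h1 := Int.lt_floor_add_one (a - s + 1/2)
        rw [round_eq] at hr
        have h2 : (-2 : ℝ) < (r : ℝ) := by rw [hr]; push_cast; linarith
        have h3 : (-2 : ℤ) < r := by exact_mod_cast h2
        omega
      have hrub : r ≤ (1 : ℤ) := by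
        have h1 := Int.floor_le (a - s + 1/2)
        rw [round_eq] at hr
        have h2 : (r : ℝ) < 2 := by rw [hr]; push_cast; linarith
        have h3 : r < (2 : ℤ) := by exact_mod_cast h2
        omega
      interval_cases r
      · refine Or.inr ⟨?_, hs1⟩
        push_cast at hs; linarith
      · refine Or.inl (Or.inr ⟨max_le hs0 ?_, le_min hs1 ?_⟩) <;> (push_cast at hs; linarith)
      · refine Or.inl (Or.inl ⟨hs0, ?_⟩)
        push_cast at hs; linarith
    · rintro ((⟨h1, h2⟩ | ⟨h1, h2⟩) | ⟨h1, h2⟩)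
      · have hm : |a - s - ((1 : ℤ) : ℝ)| ≤ t := by
          rw [abs_le]; push_cast; constructor <;> linarith
        exact ⟨le_trans (round_min _ _) hm, h1, by linarith⟩
      · have h1' : 0 ≤ s := le_trans (le_max_left _ _) h1
        have h1'' : a - t ≤ s := le_trans (le_max_right _ _) h1
        have h2' : s ≤ 1 := le_trans h2 (min_le_left _ _)
        have h2'' : s ≤ a + t := le_trans h2 (min_le_right _ _)
        have hm : |a - s - ((0 : ℤ) : ℝ)| ≤ t := by
          rw [abs_le]; push_cast; constructor <;> linarith
        exact ⟨le_trans (round_min _ _) hm, h1', h2'⟩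
      · have hm : |a - s - ((-1 : ℤ) : ℝ)| ≤ t := by
          rw [abs_le]; push_cast; constructor <;> linarith
        exact ⟨le_trans (round_min _ _) hm, by linarith, h2⟩
  rw [hset]
  have hAB : AEDisjoint volume (Icc 0 (a+t-1)) (Icc (max 0 (a-t)) (min 1 (a+t))) := by
    refine measure_mono_null (fun x hx => ?_) (hnull (max 0 (a-t)) (a+t-1)
      (le_trans (by linarith) (le_max_right 0 (a-t))))
    exact ⟨hx.2.1, hx.1.2⟩
  have hAC : AEDisjoint volume (Icc 0 (a+t-1)) (Icc (a+1-t) 1) := by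
    refine measure_mono_null (fun x hx => ?_) (hnull (a+1-t) (a+t-1) (by linarith))
    exact ⟨hx.2.1, hx.1.2⟩
  have hBC : AEDisjoint volume (Icc (max 0 (a-t)) (min 1 (a+t))) (Icc (a+1-t) 1) := by
    refine measure_mono_null (fun x hx => ?_) (hnull (a+1-t) (min 1 (a+t))
      (le_trans (min_le_right _ _) (by linarith)))
    exact ⟨hx.2.1, hx.1.2⟩
  rw [measure_union₀ measurableSet_Icc.nullMeasurableSet (hAC.union_left hBC),
    measure_union₀ measurableSet_Icc.nullMeasurableSet hAB,
    Real.volume_Icc, Real.volume_Icc, Real.volume_Icc]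
  rcases lt_or_ge a t with h | h
  · have e1 : ENNReal.ofReal (a + t - 1 - 0) = 0 := by
      rw [ENNReal.ofReal_eq_zero]; linarith
    rw [e1, zero_add, min_eq_right (by linarith : a + t ≤ 1),
      max_eq_left (by linarith : a - t ≤ 0), ← ENNReal.ofReal_add (by linarith) (by linarith)]
    congr 1; ring
  · rcases le_or_gt a (1 - t) with h' | h'
    · have e1 : ENNReal.ofReal (a + t - 1 - 0) = 0 := by
        rw [ENNReal.ofReal_eq_zero]; linarith
      have e3 : ENNReal.ofReal (1 - (a + 1 - t)) = 0 := by
        rw [ENNReal.ofReal_eq_zero]; linarith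
      rw [e1, e3, zero_add, add_zero, min_eq_right (by linarith : a + t ≤ 1),
        max_eq_right (by linarith : (0:ℝ) ≤ a - t)]
      congr 1; ring
    · have e3 : ENNReal.ofReal (1 - (a + 1 - t)) = 0 := by
        rw [ENNReal.ofReal_eq_zero]; linarith
      rw [e3, add_zero, min_eq_left (by linarith : (1:ℝ) ≤ a + t),
        max_eq_right (by linarith : (0:ℝ) ≤ a - t),
        ← ENNReal.ofReal_add (by linarith) (by linarith)]
      congr 1; ring

lemma measurable_round_real : Measurable fun u : ℝ => (round u : ℝ) := by
  have : (fun u : ℝ => (round u : ℝ)) = fun u => (Int.cast : ℤ → ℝ) ⌊u + 1/2⌋ := by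
    funext u; rw [round_eq]
  rw [this]
  exact (measurable_from_top).comp ((measurable_id.add_const (1/2 : ℝ)).floor)

lemma measurable_tdist (d : ℕ) :
    Measurable fun p : (Fin d → ℝ) × (Fin d → ℝ) => tdist d p.1 p.2 := by
  simp only [tdist_eq]
  apply Measurable.norm
  apply measurable_pi_lambda
  intro i
  have h1 : Measurable fun p : (Fin d → ℝ) × (Fin d → ℝ) => p.1 i - p.2 i :=
    ((measurable_pi_apply i).comp measurable_fst).sub ((measurable_pi_apply i).comp measurable_snd)
  exact h1.sub (measurable_round_real.comp h1)

lemma measurable_tdist_right (d : ℕ) (x : Fin d → ℝ) :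
    Measurable fun y : Fin d → ℝ => tdist d x y := by
  simp only [tdist_eq]
  apply Measurable.norm
  apply measurable_pi_lambda
  intro i
  have h1 : Measurable fun y : Fin d → ℝ => x i - y i :=
    measurable_const.sub (measurable_pi_apply i)
  exact h1.sub (measurable_round_real.comp h1)

lemma tdist_nonneg (d : ℕ) (x y : Fin d → ℝ) : 0 ≤ tdist d x y :=
  le_ciInf fun _ => norm_nonneg _

lemma tdist_le_half (d : ℕ) (x y : Fin d → ℝ) : tdist d x y ≤ 1/2 := by
  rw [tdist_eq]
  rw [pi_norm_le_iff_of_nonneg (by norm_num : (0:ℝ) ≤ 1/2)]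
  intro i
  exact abs_sub_round _

lemma cube_ball (d : ℕ) {x : Fin d → ℝ} (hx : x ∈ Icc (0 : Fin d → ℝ) 1) {t : ℝ}
    (ht0 : 0 ≤ t) (ht : t ≤ 1/2) :
    volume ({y : Fin d → ℝ | tdist d x y ≤ t} ∩ Icc 0 1)
      = ENNReal.ofReal (2*t) ^ d := by
  have hset : {y : Fin d → ℝ | tdist d x y ≤ t} ∩ Icc 0 1
      = univ.pi fun i => {s : ℝ | |x i - s - round (x i - s)| ≤ t} ∩ Icc 0 1 := by
    ext y
    simp only [mem_inter_iff, mem_setOf_eq, mem_Icc, mem_univ_pi, tdist_eq,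
      pi_norm_le_iff_of_nonneg ht0, Real.norm_eq_abs, Pi.le_def]
    constructor
    · rintro ⟨h1, h2, h3⟩ i
      exact ⟨h1 i, h2 i, h3 i⟩
    · intro h
      exact ⟨fun i => (h i).1, fun i => (h i).2.1, fun i => (h i).2.2⟩
  rw [hset, volume_pi_pi]
  have : ∀ i : Fin d, volume ({s : ℝ | |x i - s - round (x i - s)| ≤ t} ∩ Icc 0 1)
      = ENNReal.ofReal (2*t) := fun i => oneD (hx.1 i) (hx.2 i) ht0 ht
  simp_rw [this]
  rw [Finset.prod_const, Finset.card_univ, Fintype.card_fin]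

lemma cubeMeasure_univ (d : ℕ) : cubeMeasure d univ = 1 := by
  rw [cubeMeasure, Measure.restrict_apply MeasurableSet.univ, univ_inter, unitCube,
    Real.volume_Icc_pi]
  simp

instance (d : ℕ) : IsProbabilityMeasure (cubeMeasure d) := ⟨cubeMeasure_univ d⟩

lemma cube_tail (d : ℕ) {x : Fin d → ℝ} (hx : x ∈ unitCube d) {t : ℝ}
    (ht0 : 0 ≤ t) (ht : t ≤ 1/2) :
    cubeMeasure d {y : Fin d → ℝ | t < tdist d x y} = ENNReal.ofReal (1 - (2*t)^d) := by
  have hmeas : MeasurableSet {y : Fin d → ℝ | tdist d x y ≤ t} :=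
    measurableSet_le (measurable_tdist_right d x) measurable_const
  have hcompl : {y : Fin d → ℝ | t < tdist d x y} = {y : Fin d → ℝ | tdist d x y ≤ t}ᶜ := by
    ext y; simp [not_le]
  rw [hcompl, measure_compl hmeas (measure_ne_top _ _), cubeMeasure_univ d, cubeMeasure,
    Measure.restrict_apply hmeas, unitCube, cube_ball d hx ht0 ht,
    ← ENNReal.ofReal_pow (by linarith), ← ENNReal.ofReal_one, ← ENNReal.ofReal_sub]
  positivity

lemma lt_iInf_fin {n : ℕ} (hn : 0 < n) (f : Fin n → ℝ) (t : ℝ) :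
    t < ⨅ i, f i ↔ ∀ i, t < f i := by
  haveI : Nonempty (Fin n) := ⟨⟨0, hn⟩⟩
  have hbdd : BddBelow (Set.range f) := (Set.finite_range f).bddBelow
  constructor
  · exact fun h i => lt_of_lt_of_le h (ciInf_le hbdd i)
  · intro h
    obtain ⟨i0, hi0⟩ := Finite.exists_min f
    have : ⨅ i, f i = f i0 := le_antisymm (ciInf_le hbdd i0) (le_ciInf hi0)
    rw [this]; exact h i0

lemma iInf_le_half {n d : ℕ} (hn : 0 < n) (x : Fin d → ℝ) (ω : Fin n → Fin d → ℝ) :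
    ⨅ i, tdist d x (ω i) ≤ 1/2 := by
  haveI : Nonempty (Fin n) := ⟨⟨0, hn⟩⟩
  have hbdd : BddBelow (Set.range fun i => tdist d x (ω i)) := (Set.finite_range _).bddBelow
  exact le_trans (ciInf_le hbdd ⟨0, hn⟩) (tdist_le_half d x _)

lemma tail_product (d : ℕ) (n : ℕ) (hn : 0 < n) {x : Fin d → ℝ} (hx : x ∈ unitCube d) {t : ℝ}
    (ht0 : 0 ≤ t) (ht : t ≤ 1/2) :
    (Measure.pi fun _ : Fin n => cubeMeasure d) {ω | t < ⨅ i, tdist d x (ω i)}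
      = ENNReal.ofReal ((1 - (2*t)^d)^n) := by
  have hset : {ω : Fin n → Fin d → ℝ | t < ⨅ i, tdist d x (ω i)}
      = univ.pi fun _ : Fin n => {y : Fin d → ℝ | t < tdist d x y} := by
    ext ω
    simp only [mem_setOf_eq, mem_univ_pi, lt_iInf_fin hn]
  rw [hset, Measure.pi_pi]
  simp_rw [cube_tail d hx ht0 ht]
  rw [Finset.prod_const, Finset.card_univ, Fintype.card_fin, ← ENNReal.ofReal_pow]
  have h2t : (2*t)^d ≤ 1 := pow_le_one₀ (by linarith) (by linarith)
  linarith

lemma inner_lintegral (d : ℕ) (hd : 0 < d) (q : ℝ) (hq : 1 ≤ q) (n : ℕ) (hn : 0 < n)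
    {x : Fin d → ℝ} (hx : x ∈ unitCube d) :
    ∫⁻ ω : Fin n → Fin d → ℝ, ENNReal.ofReal ((⨅ i, tdist d x (ω i)) ^ q)
        ∂(Measure.pi fun _ : Fin n => cubeMeasure d)
      = ENNReal.ofReal (∫ t in Ioc (0:ℝ) (1/2), (1 - (2*t)^d)^n * (q * t^(q-1))) := by
  haveI : Nonempty (Fin n) := ⟨⟨0, hn⟩⟩
  set Pn := (Measure.pi fun _ : Fin n => cubeMeasure d)
  set f : (Fin n → Fin d → ℝ) → ℝ := fun ω => ⨅ i, tdist d x (ω i) with hf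
  have f_nn : 0 ≤ f := fun ω => le_ciInf fun i => tdist_nonneg d x (ω i)
  have f_mble : Measurable f := by
    apply Measurable.iInf
    intro i
    exact (measurable_tdist_right d x).comp (measurable_pi_apply i)
  set g : ℝ → ℝ := fun t => q * t^(q-1) with hg
  have hgc : Continuous g := continuous_const.mul (Real.continuous_rpow_const (by linarith))
  have g_intble : ∀ t > 0, IntervalIntegrable g volume 0 t := fun t _ =>
    hgc.intervalIntegrable 0 t
  have g_nn : ∀ᵐ t ∂(volume.restrict (Ioi (0:ℝ))), 0 ≤ g t := by
    rw [ae_restrict_iff' measurableSet_Ioi]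
    refine ae_of_all _ fun t ht => ?_
    have : (0:ℝ) < t := ht
    positivity
  have key := lintegral_comp_eq_lintegral_meas_lt_mul Pn (ae_of_all _ f_nn)
    f_mble.aemeasurable g_intble g_nn
  have hG : ∀ ω, (∫ t in (0:ℝ)..(f ω), g t) = (f ω) ^ q := by
    intro ω
    rw [intervalIntegral.integral_const_mul, integral_rpow (Or.inl (by linarith))]
    rw [Real.zero_rpow (by linarith : q - 1 + 1 ≠ 0)]
    have : q - 1 + 1 = q := by ring
    rw [this]
    field_simp
    rw [sub_zero]
  simp_rw [hG] at key
  rw [key]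
  have hsplit : (Ioi (0:ℝ)) = Ioc (0:ℝ) (1/2) ∪ Ioi (1/2) := (Ioc_union_Ioi_eq_Ioi (by norm_num)).symm
  rw [hsplit, lintegral_union measurableSet_Ioi Ioc_disjoint_Ioi_same]
  have hzero : ∫⁻ t in Ioi (1/2:ℝ), Pn {a | t < f a} * ENNReal.ofReal (g t) = 0 := by
    rw [setLIntegral_congr_fun measurableSet_Ioi (fun t (ht : 1/2 < t) => ?_)]
    · exact lintegral_zero
    · have : {a | t < f a} = ∅ := by
        ext ω; simp only [mem_setOf_eq, mem_empty_iff_false, iff_false, not_lt]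
        exact le_trans (iInf_le_half hn x ω) (le_of_lt ht)
      rw [this, measure_empty, zero_mul]
  rw [hzero, add_zero]
  rw [setLIntegral_congr_fun measurableSet_Ioc
    (fun t (ht : t ∈ Ioc (0:ℝ) (1/2)) => ?_)]
  · rw [← ofReal_integral_eq_lintegral_ofReal]
    · exact ((continuous_const.sub ((continuous_const.mul continuous_id).pow d)).pow n).mul
        hgc |>.integrableOn_Ioc
    · filter_upwards [ae_restrict_mem measurableSet_Ioc] with t ht
      have h1 : (0:ℝ) < t := ht.1
      have h2 : (2*t)^d ≤ 1 := pow_le_one₀ (by linarith) (by linarith [ht.2])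
      have h3 : 0 ≤ (1 - (2*t)^d)^n := pow_nonneg (by linarith) n
      have h4 : 0 ≤ g t := by simp only [hg]; positivity
      exact mul_nonneg h3 h4
  · show Pn {a | t < f a} * ENNReal.ofReal (g t) = ENNReal.ofReal ((1 - (2*t)^d)^n * (q * t^(q-1)))
    rw [tail_product d n hn hx (le_of_lt ht.1) ht.2, ← ENNReal.ofReal_mul]
    have h2 : (2*t)^d ≤ 1 := pow_le_one₀ (by linarith [ht.1]) (by linarith [ht.2])
    exact pow_nonneg (by linarith) n

lemma beta_real {a : ℝ} (ha : 0 < a) (n : ℕ) :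
    ∫ u in (0:ℝ)..1, u^(a-1) * (1-u)^n
      = (n.factorial : ℝ) / ∏ j ∈ Finset.range (n+1), (a + j) := by
  have key := Complex.betaIntegral_eval_nat_add_one_right
    (u := (a : ℂ)) (by simpa using ha) n
  rw [Complex.betaIntegral] at key
  have hconv : ∫ x : ℝ in (0:ℝ)..1, (x:ℂ) ^ ((a:ℂ) - 1) * (1 - (x:ℂ)) ^ ((n:ℂ) + 1 - 1)
      = ((∫ u in (0:ℝ)..1, u^(a-1) * (1-u)^n : ℝ) : ℂ) := by
    rw [← intervalIntegral.integral_ofReal]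
    apply intervalIntegral.integral_congr
    intro x hx
    rw [uIcc_of_le (by norm_num : (0:ℝ) ≤ 1)] at hx
    have hx0 : (0:ℝ) ≤ x := hx.1
    push_cast
    rw [show ((a:ℂ) - 1) = ((a - 1 : ℝ):ℂ) by push_cast; ring, ← Complex.ofReal_cpow hx0,
      show ((n:ℂ) + 1 - 1) = ((n:ℕ):ℂ) by ring, Complex.cpow_natCast]
  rw [hconv] at key
  have : ((n.factorial : ℝ) / ∏ j ∈ Finset.range (n+1), (a + j) : ℝ)
      = ((n.factorial : ℂ) / ∏ j ∈ Finset.range (n+1), ((a:ℂ) + j) : ℂ).re := by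
    rw [show ((n.factorial : ℂ) / ∏ j ∈ Finset.range (n+1), ((a:ℂ) + j) : ℂ)
      = (((n.factorial : ℝ) / ∏ j ∈ Finset.range (n+1), (a + j) : ℝ) : ℂ) by push_cast; ring]
    rw [Complex.ofReal_re]
  rw [this, ← key, Complex.ofReal_re]

lemma pointwise_subst {d : ℕ} (hd : 0 < d) {q : ℝ} (hq : 1 ≤ q) (n : ℕ) {x : ℝ} (hx : 0 < x) :
    ((d:ℝ) * x^(d-1:ℕ)) * ((x^d)^(q/(d:ℝ)-1) * (1-x^d)^n)
      = (d:ℝ) * (x^(q-1) * (1-x^d)^n) := by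
  have hd0 : (d:ℝ) ≠ 0 := Nat.cast_ne_zero.mpr hd.ne'
  have h1 : ((x^d : ℝ))^(q/(d:ℝ)-1) = x^(q-(d:ℝ)) := by
    rw [← Real.rpow_natCast x d, ← Real.rpow_mul hx.le]
    congr 1
    field_simp
  have h2 : (x^(d-1:ℕ) : ℝ) = x^((d:ℝ)-1) := by
    rw [← Real.rpow_natCast x (d-1)]
    congr 1
    push_cast [Nat.cast_sub hd]
    ring
  rw [h1, h2, mul_assoc, ← mul_assoc (x^((d:ℝ)-1)), ← Real.rpow_add hx]
  ring_nf

lemma subst_K (d : ℕ) (hd : 0 < d) (q : ℝ) (hq : 1 ≤ q) (n : ℕ) :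
    ∫ s in (0:ℝ)..1, s^(q-1) * (1-s^d)^n
      = (1/(d:ℝ)) * ∫ u in (0:ℝ)..1, u^(q/(d:ℝ)-1) * (1-u)^n := by
  have hd0 : (d:ℝ) ≠ 0 := Nat.cast_ne_zero.mpr hd.ne'
  have hqd : (0:ℝ) < q/(d:ℝ) := div_pos (by linarith) (by exact_mod_cast hd)
  set g : ℝ → ℝ := fun u => u^(q/(d:ℝ)-1) * (1-u)^n with hgdef
  set f : ℝ → ℝ := fun s => s^d with hfdef
  set f' : ℝ → ℝ := fun s => (d:ℝ) * s^(d-1:ℕ) with hf'def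
  have huIcc : ([[(0:ℝ), 1]]) = Icc (0:ℝ) 1 := uIcc_of_le (by norm_num)
  have hgint : IntervalIntegrable g volume 0 1 := by
    apply IntervalIntegrable.mul_continuousOn
    · exact intervalIntegral.intervalIntegrable_rpow' (by linarith)
    · exact ((continuous_pow n).comp (continuous_const.sub continuous_id)).continuousOn
  have hcont2 : Continuous fun x : ℝ => (d:ℝ) * (x^(q-1) * (1-x^d)^n) :=
    continuous_const.mul ((Real.continuous_rpow_const (by linarith)).mul
      ((continuous_pow n).comp (continuous_const.sub (continuous_pow d))))
  have key : (∫ x in (0:ℝ)..1, f' x • (g ∘ f) x) = ∫ u in (f 0)..(f 1), g u := by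
    apply intervalIntegral.integral_comp_smul_deriv''' (f := f) (f' := f') (g := g)
    · exact (continuous_pow d).continuousOn
    · intro x _
      exact (hasDerivAt_pow d x).hasDerivWithinAt
    · intro u hu
      simp only [min_self, hfdef] at hu
      obtain ⟨s, hs, rfl⟩ := hu
      rw [min_eq_left (by norm_num : (0:ℝ) ≤ 1), max_eq_right (by norm_num : (0:ℝ) ≤ 1)] at hs
      have hs0 : 0 < s^d := pow_pos hs.1 d
      apply ContinuousAt.continuousWithinAt
      exact (Real.continuousAt_rpow_const _ _ (Or.inl hs0.ne')).mul
        (((continuous_pow n).comp (continuous_const.sub continuous_id)).continuousAt)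
    · -- IntegrableOn g (f '' [[0,1]])
      have hIcc : IntegrableOn g (Icc (0:ℝ) 1) :=
        (intervalIntegrable_iff_integrableOn_Icc_of_le (by norm_num : (0:ℝ) ≤ 1)).mp hgint
      refine hIcc.mono_set ?_
      rintro u ⟨s, hs, rfl⟩
      rw [huIcc] at hs
      exact ⟨pow_nonneg hs.1 d, pow_le_one₀ hs.1 hs.2⟩
    · -- IntegrableOn (fun x => f' x • (g ∘ f) x) [[0,1]]
      rw [huIcc]
      apply (hcont2.integrableOn_Icc).congr
      have hne : ∀ᵐ x : ℝ ∂volume, x ≠ 0 := by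
        rw [ae_iff]
        convert Real.volume_singleton (a := (0:ℝ)) using 2
        ext x; simp
      filter_upwards [ae_restrict_mem measurableSet_Icc, ae_restrict_of_ae hne] with x hx hxne
      have hxpos : 0 < x := lt_of_le_of_ne hx.1 (Ne.symm hxne)
      simp only [smul_eq_mul, Function.comp_apply, hgdef, hf'def, hfdef]
      exact (pointwise_subst hd hq n hxpos).symm
  have lhs_eq : (∫ x in (0:ℝ)..1, f' x • (g ∘ f) x)
      = (d:ℝ) * ∫ s in (0:ℝ)..1, s^(q-1) * (1-s^d)^n := by
    rw [← intervalIntegral.integral_const_mul]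
    apply intervalIntegral.integral_congr_ae
    refine ae_of_all _ fun x hx => ?_
    rw [uIoc_of_le (by norm_num : (0:ℝ) ≤ 1)] at hx
    simp only [smul_eq_mul, Function.comp_apply, hgdef, hf'def, hfdef]
    exact pointwise_subst hd hq n hx.1
  have hb0 : f 0 = 0 := by simp [hfdef, zero_pow hd.ne']
  have hb1 : f 1 = 1 := by simp [hfdef]
  rw [hb0, hb1, lhs_eq] at key
  rw [← key]
  field_simp

lemma J_value (d : ℕ) (hd : 0 < d) (q : ℝ) (hq : 1 ≤ q) (n : ℕ) :
    (∫ t in Ioc (0:ℝ) (1/2), (1 - (2*t)^d)^n * (q * t^(q-1)))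
      = (2:ℝ)^(-q) * (n.factorial : ℝ) / ∏ k ∈ Finset.range n, (q/(d:ℝ) + (k+1)) := by
  have hd0 : (d:ℝ) ≠ 0 := Nat.cast_ne_zero.mpr hd.ne'
  have hdpos : (0:ℝ) < d := by exact_mod_cast hd
  have hqd : (0:ℝ) < q/(d:ℝ) := div_pos (by linarith) hdpos
  set F : ℝ → ℝ := fun s => (1-s^d)^n * (q * (s/2)^(q-1)) with hFdef
  have hFeq : ∀ t : ℝ, F (2*t) = (1-(2*t)^d)^n * (q * t^(q-1)) := by
    intro t
    simp only [hFdef]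
    rw [mul_div_cancel_left₀ t two_ne_zero]
  have step0 : (∫ t in Ioc (0:ℝ) (1/2), (1 - (2*t)^d)^n * (q * t^(q-1)))
      = ∫ t in (0:ℝ)..(1/2), F (2*t) := by
    rw [intervalIntegral.integral_of_le (by norm_num : (0:ℝ) ≤ 1/2)]
    simp_rw [hFeq]
  have step1 : (∫ t in (0:ℝ)..(1/2), F (2*t)) = (2:ℝ)⁻¹ • ∫ s in (0:ℝ)..1, F s := by
    rw [intervalIntegral.integral_comp_mul_left F two_ne_zero]
    norm_num
  have step2 : (∫ s in (0:ℝ)..1, F s)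
      = (q * (2:ℝ)^(-(q-1))) * ∫ s in (0:ℝ)..1, s^(q-1) * (1-s^d)^n := by
    rw [← intervalIntegral.integral_const_mul]
    apply intervalIntegral.integral_congr
    intro s hs
    rw [uIcc_of_le (by norm_num : (0:ℝ) ≤ 1)] at hs
    have hs0 : 0 ≤ s := hs.1
    simp only [hFdef]
    have hhalf : (s/2 : ℝ)^(q-1) = s^(q-1) * (2:ℝ)^(-(q-1)) := by
      rw [div_eq_mul_inv, Real.mul_rpow hs0 (by norm_num),
        Real.inv_rpow (by norm_num : (0:ℝ) ≤ 2), ← Real.rpow_neg (by norm_num : (0:ℝ) ≤ 2)]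
    rw [hhalf]
    ring
  have hprod : ∏ j ∈ Finset.range (n+1), (q/(d:ℝ) + j)
      = (q/(d:ℝ)) * ∏ k ∈ Finset.range n, (q/(d:ℝ) + (k+1)) := by
    rw [Finset.prod_range_succ']
    push_cast
    ring
  have hP : (0:ℝ) < ∏ k ∈ Finset.range n, (q/(d:ℝ) + (k+1)) := by
    apply Finset.prod_pos
    intro k _
    positivity
  rw [step0, step1, step2, subst_K d hd q hq n, beta_real hqd n, hprod]
  have h2q : (2:ℝ)^(-(q-1)) = 2 * (2:ℝ)^(-q) := by
    rw [show -(q-1) = 1 + -q by ring, Real.rpow_add (by norm_num : (0:ℝ) < 2), Real.rpow_one]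
  rw [smul_eq_mul, h2q]
  have hq0 : q ≠ 0 := by linarith
  field_simp

lemma measurable_M_prod (d n : ℕ) :
    Measurable fun p : (Fin n → Fin d → ℝ) × (Fin d → ℝ) => ⨅ i, tdist d p.2 (p.1 i) := by
  apply Measurable.iInf
  intro i
  simp only [tdist_eq]
  apply Measurable.norm
  apply measurable_pi_lambda
  intro j
  have h1 : Measurable fun p : (Fin n → Fin d → ℝ) × (Fin d → ℝ) => p.2 j - p.1 i j :=
    ((measurable_pi_apply j).comp measurable_snd).sub
      ((measurable_pi_apply j).comp ((measurable_pi_apply i).comp measurable_fst))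
  exact h1.sub (measurable_round_real.comp h1)

lemma measurable_M (d n : ℕ) (x : Fin d → ℝ) :
    Measurable fun ω : Fin n → Fin d → ℝ => ⨅ i, tdist d x (ω i) := by
  apply Measurable.iInf
  intro i
  exact (measurable_tdist_right d x).comp (measurable_pi_apply i)

theorem stmt12 (d : ℕ) (hd : 0 < d) (q : ℝ) (hq : 1 ≤ q) (n : ℕ) (hn : 0 < n) :
    (∫ ω : Fin n → Fin d → ℝ,
        ∫ x in unitCube d, (⨅ i, tdist d x (ω i)) ^ q
        ∂volume ∂(Measure.pi fun _ : Fin n => cubeMeasure d))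
      = (2 : ℝ) ^ (-q) * (Nat.factorial n : ℝ)
          / ∏ k ∈ Finset.range n, (q / d + (k + 1)) := by
  haveI : Nonempty (Fin n) := ⟨⟨0, hn⟩⟩
  set Pn := (Measure.pi fun _ : Fin n => cubeMeasure d) with hPn
  set J : ℝ := ∫ t in Ioc (0:ℝ) (1/2), (1 - (2*t)^d)^n * (q * t^(q-1)) with hJ
  have hq0 : 0 ≤ q := by linarith
  -- measurability of the inner inf, jointly
  have hMmeas : Measurable fun p : (Fin n → Fin d → ℝ) × (Fin d → ℝ) =>
      (⨅ i, tdist d p.2 (p.1 i)) := measurable_M_prod d n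
  have hΦmeas : Measurable fun p : (Fin n → Fin d → ℝ) × (Fin d → ℝ) =>
      (⨅ i, tdist d p.2 (p.1 i)) ^ q :=
    (Real.continuous_rpow_const hq0).measurable.comp hMmeas
  -- bounds
  have hM_nonneg : ∀ (x : Fin d → ℝ) (ω : Fin n → Fin d → ℝ),
      0 ≤ ⨅ i, tdist d x (ω i) := fun x ω => le_ciInf fun i => tdist_nonneg d x (ω i)
  have hΦ_nonneg : ∀ (x : Fin d → ℝ) (ω : Fin n → Fin d → ℝ),
      0 ≤ (⨅ i, tdist d x (ω i)) ^ q := fun x ω => Real.rpow_nonneg (hM_nonneg x ω) q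
  have hΦ_le_one : ∀ (x : Fin d → ℝ) (ω : Fin n → Fin d → ℝ),
      (⨅ i, tdist d x (ω i)) ^ q ≤ 1 := fun x ω =>
    Real.rpow_le_one (hM_nonneg x ω) (le_trans (iInf_le_half hn x ω) (by norm_num)) hq0
  -- integrability on the product
  have hint : Integrable (Function.uncurry fun (ω : Fin n → Fin d → ℝ) (x : Fin d → ℝ) =>
      (⨅ i, tdist d x (ω i)) ^ q) (Pn.prod (cubeMeasure d)) := by
    constructor
    · exact hΦmeas.aestronglyMeasurable
    · apply HasFiniteIntegral.of_bounded (C := (1:ℝ))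
      refine ae_of_all _ fun p => ?_
      simp only [Function.uncurry]
      rw [Real.norm_eq_abs, abs_of_nonneg (hΦ_nonneg p.2 p.1)]
      exact hΦ_le_one p.2 p.1
  have swap := integral_integral_swap (f := fun (ω : Fin n → Fin d → ℝ) (x : Fin d → ℝ) =>
    (⨅ i, tdist d x (ω i)) ^ q) hint
  calc (∫ ω : Fin n → Fin d → ℝ, ∫ x in unitCube d, (⨅ i, tdist d x (ω i)) ^ q ∂volume ∂Pn)
      = ∫ ω : Fin n → Fin d → ℝ, ∫ x, (⨅ i, tdist d x (ω i)) ^ q ∂(cubeMeasure d) ∂Pn := rfl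
    _ = ∫ x, ∫ ω : Fin n → Fin d → ℝ, (⨅ i, tdist d x (ω i)) ^ q ∂Pn ∂(cubeMeasure d) := swap
    _ = ∫ x in unitCube d, J ∂volume := by
        apply setIntegral_congr_fun (measurableSet_Icc)
        intro x hx
        have hmble : Measurable fun ω : Fin n → Fin d → ℝ => (⨅ i, tdist d x (ω i)) ^ q :=
          (Real.continuous_rpow_const hq0).measurable.comp (measurable_M d n x)
        show (∫ ω : Fin n → Fin d → ℝ, (⨅ i, tdist d x (ω i)) ^ q ∂Pn) = J
        rw [integral_eq_lintegral_of_nonneg_ae (ae_of_all _ fun ω => hΦ_nonneg x ω)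
          hmble.aestronglyMeasurable, inner_lintegral d hd q hq n hn hx]
        apply ENNReal.toReal_ofReal
        apply setIntegral_nonneg measurableSet_Ioc
        intro t ht
        have h2 : (2*t)^d ≤ 1 := pow_le_one₀ (by linarith [ht.1]) (by linarith [ht.2])
        have h3 : 0 ≤ (1 - (2*t)^d)^n := pow_nonneg (by linarith) n
        have h4 : 0 ≤ q * t^(q-1) := by
          have := ht.1
          positivity
        exact mul_nonneg h3 h4
    _ = J := by
        rw [setIntegral_const]
        have : volume (unitCube d) = 1 := by
          have := cubeMeasure_univ d
          rwa [cubeMeasure, Measure.restrict_apply MeasurableSet.univ, univ_inter] at this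
        rw [measureReal_def, this]
        simp
    _ = (2 : ℝ) ^ (-q) * (Nat.factorial n : ℝ) / ∏ k ∈ Finset.range n, (q / d + (k + 1)) :=
        J_value d hd q hq n
end
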